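/- arXiv:math/0404526 — 5 statements merged into one kernel-verified Lean document; each statement's English description precedes it below -/
import Mathlib

section
/- Let X be a Banach lattice, 1 < p < ∞, and C > 0, and suppose that every normalized pairwise disjoint sequence in X has a subsequence with an upper p-estimate with constant C. Let {e_i}_{i≥1} be a normalized pairwise disjoint sequence in X which is 1-symmetric, i.e. ‖Σ_i a_i e_{σ(i)}‖ = ‖Σ_i a_i e_i‖ for every injection σ : ℕ → ℕ and every finitely supported scalar sequence {a_i}. Then for all n, k ∈ ℕ and all scalars a_1,…,a_k one has ‖Σ_{i=1}^k a_i (Σ_{j=1}^n e_{(i−1)n+j})‖ ≤ C n^{1/p} ‖Σ_{i=1}^k a_i e_i‖. -/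
open Filter Finset

/-- A sequence is normalized if every term has norm one. -/
def IsNormalizedSeq {X : Type*} [NormedAddCommGroup X] (x : ℕ → X) : Prop :=
  ∀ n, ‖x n‖ = 1

/-- A sequence in a Banach lattice is pairwise disjoint if `|x i| ⊓ |x j| = 0` for `i ≠ j`. -/
def IsDisjointSeq {X : Type*} [NormedAddCommGroup X] [Lattice X] [HasSolidNorm X]
    [IsOrderedAddMonoid X] (x : ℕ → X) : Prop :=
  ∀ i j, i ≠ j → |x i| ⊓ |x j| = 0

/-- A sequence is weakly null if `f (x n) → 0` for every continuous linear functional `f`. -/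
def IsWeaklyNull {X : Type*} [NormedAddCommGroup X] [NormedSpace ℝ X] (x : ℕ → X) : Prop :=
  ∀ f : X →L[ℝ] ℝ, Tendsto (fun n => f (x n)) atTop (nhds 0)

/-- A sequence has an upper `p`-estimate with constant `C`. -/
def HasUpperEstimate {X : Type*} [NormedAddCommGroup X] [NormedSpace ℝ X]
    (p C : ℝ) (x : ℕ → X) : Prop :=
  ∀ (n : ℕ) (a : ℕ → ℝ),
    ‖∑ k ∈ Finset.range n, a k • x k‖ ≤ C * (∑ k ∈ Finset.range n, |a k| ^ p) ^ (1 / p)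

/-- A sequence has a lower `q`-estimate with constant `C`. -/
def HasLowerEstimate {X : Type*} [NormedAddCommGroup X] [NormedSpace ℝ X]
    (q C : ℝ) (x : ℕ → X) : Prop :=
  ∀ (n : ℕ) (a : ℕ → ℝ),
    C * (∑ k ∈ Finset.range n, |a k| ^ q) ^ (1 / q) ≤ ‖∑ k ∈ Finset.range n, a k • x k‖

/-- A sequence is equivalent to the unit vector basis of `ℓ_r`. -/
def EquivUnitBasisLp {X : Type*} [NormedAddCommGroup X] [NormedSpace ℝ X]
    (r : ℝ) (x : ℕ → X) : Prop :=
  ∃ c C : ℝ, 0 < c ∧ 0 < C ∧ HasLowerEstimate r c x ∧ HasUpperEstimate r C x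

/-- `smoothOrder p` is the greatest integer strictly less than `p` (for `p > 1`). -/
noncomputable def smoothOrder (p : ℝ) : ℕ := ⌈p⌉₊ - 1

/-- `φ : X → ℝ` is `UH^p`-smooth: it is `N`-times Fréchet differentiable, where `N` is the
greatest integer strictly below `p`, and its `N`-th derivative is `(p-N)`-Hölder. -/
def IsUHSmoothFun {X : Type*} [NormedAddCommGroup X] [NormedSpace ℝ X]
    (p : ℝ) (φ : X → ℝ) : Prop :=
  ContDiff ℝ (smoothOrder p) φ ∧
  ∃ M : ℝ, 0 < M ∧ ∀ x y : X,
    ‖iteratedFDeriv ℝ (smoothOrder p) φ x - iteratedFDeriv ℝ (smoothOrder p) φ y‖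
      ≤ M * ‖x - y‖ ^ (p - (smoothOrder p : ℝ))

/-- A Banach space is `UH^p`-smooth if it carries a `UH^p`-smooth bump function. -/
def IsUHSmooth (p : ℝ) (X : Type*) [NormedAddCommGroup X] [NormedSpace ℝ X] : Prop :=
  ∃ φ : X → ℝ, IsUHSmoothFun p φ ∧
    Bornology.IsBounded (Function.support φ) ∧ (Function.support φ).Nonempty

/-- `X` has the `UDS_p`-property: there is a uniform constant `C` such that every normalized
pairwise disjoint sequence has a subsequence with an upper `p`-estimate with constant `C`. -/
def HasUDS (X : Type*) [NormedAddCommGroup X] [Lattice X] [HasSolidNorm X]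
    [IsOrderedAddMonoid X] [NormedSpace ℝ X] (p : ℝ) : Prop :=
  ∃ C : ℝ, 0 < C ∧ ∀ x : ℕ → X, IsNormalizedSeq x → IsDisjointSeq x →
    ∃ φ : ℕ → ℕ, StrictMono φ ∧ HasUpperEstimate p C (x ∘ φ)

section Aux
variable {X : Type*} [NormedAddCommGroup X] [Lattice X] [HasSolidNorm X]
    [IsOrderedAddMonoid X] [NormedSpace ℝ X] [PosSMulStrictMono ℝ X]

/-- scalar multiplication by a positive real as an order isomorphism -/
noncomputable def mySmulIso (c : ℝ) (hc : 0 < c) : X ≃o X where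
  toFun := fun x => c • x
  invFun := fun x => c⁻¹ • x
  left_inv := fun x => inv_smul_smul₀ hc.ne' x
  right_inv := fun x => smul_inv_smul₀ hc.ne' x
  map_rel_iff' := by
    intro x y
    simp only [Equiv.coe_fn_mk]
    constructor
    · intro h
      have h2 := smul_le_smul_of_nonneg_left h (inv_nonneg.2 hc.le)
      rwa [inv_smul_smul₀ hc.ne', inv_smul_smul₀ hc.ne'] at h2
    · intro h
      exact smul_le_smul_of_nonneg_left h hc.le

lemma my_smul_sup (c : ℝ) (hc : 0 < c) (x y : X) : c • (x ⊔ y) = c • x ⊔ c • y :=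
  (mySmulIso c hc).map_sup x y

lemma my_smul_inf (c : ℝ) (hc : 0 < c) (x y : X) : c • (x ⊓ y) = c • x ⊓ c • y :=
  (mySmulIso c hc).map_inf x y

lemma my_abs_smul (c : ℝ) (x : X) : |c • x| = |c| • |x| := by
  have habs : ∀ y : X, |y| = y ⊔ -y := fun y => rfl
  rcases lt_trichotomy c 0 with hc | hc | hc
  · have h : c • x = (-c) • (-x) := by rw [neg_smul_neg]
    rw [h, habs, habs x, abs_of_neg hc, ← neg_neg x, neg_neg (-x), sup_comm, ← smul_neg,
      ← my_smul_sup (-c) (by linarith), neg_neg]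
  · simp [hc]
  · rw [habs, habs, abs_of_pos hc, ← smul_neg, ← my_smul_sup c hc]

lemma my_inf_add_zero {u v w : X} (hu : 0 ≤ u) (hv : 0 ≤ v) (hw : 0 ≤ w)
    (h1 : u ⊓ w = 0) (h2 : v ⊓ w = 0) : (u + v) ⊓ w = 0 := by
  apply le_antisymm
  · have key : (u ⊓ w) + (v ⊓ w) = ((u + v) ⊓ (u + w)) ⊓ ((w + v) ⊓ (w + w)) := by
      rw [add_inf, inf_add, inf_add]; ac_rfl
    have h3 : (u + v) ⊓ w ≤ (u ⊓ w) + (v ⊓ w) := by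
      rw [key]
      refine le_inf (le_inf inf_le_left ?_) (le_inf ?_ ?_)
      · exact inf_le_right.trans (le_add_of_nonneg_left hu)
      · exact inf_le_right.trans (le_add_of_nonneg_right hv)
      · exact inf_le_right.trans (le_add_of_nonneg_right hw)
    rwa [h1, h2, add_zero] at h3
  · exact le_inf (add_nonneg hu hv) hw

lemma my_sum_inf_zero {ι : Type*} (S : Finset ι) (g : ι → X) (w : X) (hw : 0 ≤ w)
    (hg : ∀ s ∈ S, 0 ≤ g s) (h : ∀ s ∈ S, g s ⊓ w = 0) : (∑ s ∈ S, g s) ⊓ w = 0 := by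
  induction S using Finset.cons_induction with
  | empty => simpa using inf_eq_left.mpr hw
  | cons a s ha ih =>
    rw [Finset.sum_cons]
    exact my_inf_add_zero (hg a (Finset.mem_cons_self a s))
      (Finset.sum_nonneg fun i hi => hg i (Finset.mem_cons_of_mem hi)) hw
      (h a (Finset.mem_cons_self a s))
      (ih (fun i hi => hg i (Finset.mem_cons_of_mem hi))
        (fun i hi => h i (Finset.mem_cons_of_mem hi)))

lemma my_smul_inf_zero {u v : X} (c d : ℝ) (hc : 0 ≤ c) (hd : 0 ≤ d)
    (hu : 0 ≤ u) (hv : 0 ≤ v) (h : u ⊓ v = 0) : (c • u) ⊓ (d • v) = 0 := by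
  set M : ℝ := max c d + 1 with hM
  have hM0 : 0 < M := by positivity
  have hcu : c • u ≤ M • u := by
    have h1 : (0:X) ≤ (M - c) • u := smul_nonneg (by simp [hM]; linarith [le_max_left c d]) hu
    rw [sub_smul, sub_nonneg] at h1; exact h1
  have hdv : d • v ≤ M • v := by
    have h1 : (0:X) ≤ (M - d) • v := smul_nonneg (by simp [hM]; linarith [le_max_right c d]) hv
    rw [sub_smul, sub_nonneg] at h1; exact h1
  apply le_antisymm
  · calc (c • u) ⊓ (d • v) ≤ (M • u) ⊓ (M • v) := inf_le_inf hcu hdv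
      _ = M • (u ⊓ v) := (my_smul_inf M hM0 u v).symm
      _ = 0 := by rw [h, smul_zero]
  · exact le_inf (smul_nonneg hc hu) (smul_nonneg hd hv)

lemma my_abs_sum_le {ι : Type*} (S : Finset ι) (f : ι → X) :
    |∑ s ∈ S, f s| ≤ ∑ s ∈ S, |f s| := by
  induction S using Finset.cons_induction with
  | empty => simp
  | cons a s ha ih =>
    rw [Finset.sum_cons, Finset.sum_cons]
    exact (abs_add_le _ _).trans (add_le_add_right ih _)

lemma my_sum_grid {M : Type*} [AddCommMonoid M] (f : ℕ → M) (n k : ℕ) :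
    ∑ ℓ ∈ Finset.range (n * k), f ℓ
      = ∑ j ∈ Finset.range n, ∑ i ∈ Finset.range k, f (j * k + i) := by
  induction n with
  | zero => simp
  | succ m ih =>
    rw [Finset.sum_range_succ, ← ih, Nat.succ_mul, Finset.sum_range_add]

end Aux

section Aux2
variable {X : Type*} [NormedAddCommGroup X] [Lattice X] [HasSolidNorm X]
    [IsOrderedAddMonoid X] [NormedSpace ℝ X] [PosSMulStrictMono ℝ X]

set_option linter.unusedSectionVars false

lemma my_blocks_disjoint (e : ℕ → X) (hdisj : ∀ i j, i ≠ j → |e i| ⊓ |e j| = 0)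
    (k : ℕ) (hk : 0 < k) (a : ℕ → ℝ) (m m' : ℕ) (hmm : m ≠ m') :
    |∑ i ∈ Finset.range k, a i • e (m * k + i)| ⊓
      |∑ i ∈ Finset.range k, a i • e (m' * k + i)| = 0 := by
  set W : ℕ → X := fun m => ∑ i ∈ Finset.range k, |a i| • |e (m * k + i)| with hW
  have hterm : ∀ m i, (0:X) ≤ |a i| • |e (m * k + i)| :=
    fun m i => smul_nonneg (abs_nonneg _) (abs_nonneg _)
  have hWnn : ∀ m, 0 ≤ W m := fun m => Finset.sum_nonneg fun i _ => hterm m i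
  have habs : ∀ m, |∑ i ∈ Finset.range k, a i • e (m * k + i)| ≤ W m := by
    intro m
    refine (my_abs_sum_le _ _).trans ?_
    apply Finset.sum_le_sum
    intro i _
    exact le_of_eq (my_abs_smul _ _)
  have hne : ∀ i i', i < k → i' < k → m * k + i ≠ m' * k + i' := by
    intro i i' hi hi' heq
    apply hmm
    have h1 : (m * k + i) / k = m := by
      rw [mul_comm, Nat.mul_add_div hk, Nat.div_eq_of_lt hi, add_zero]
    have h2 : (m' * k + i') / k = m' := by
      rw [mul_comm, Nat.mul_add_div hk, Nat.div_eq_of_lt hi', add_zero]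
    rw [← h1, ← h2, heq]
  have hWinf : W m ⊓ W m' = 0 := by
    apply my_sum_inf_zero _ _ _ (hWnn m') (fun i _ => hterm m i)
    intro i hi
    rw [inf_comm]
    apply my_sum_inf_zero _ _ _ (hterm m i) (fun i' _ => hterm m' i')
    intro i' hi'
    exact my_smul_inf_zero _ _ (abs_nonneg _) (abs_nonneg _) (abs_nonneg _) (abs_nonneg _)
      (hdisj _ _ (Ne.symm (hne i i' (Finset.mem_range.1 hi) (Finset.mem_range.1 hi'))))
  apply le_antisymm
  · calc _ ≤ W m ⊓ W m' := inf_le_inf (habs m) (habs m')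
      _ = 0 := hWinf
  · exact le_inf (abs_nonneg _) (abs_nonneg _)

end Aux2

/-- Proposition 1(1), intermediate claim: if every normalized pairwise disjoint sequence in the
Banach lattice `X` has a subsequence with an upper `p`-estimate with uniform constant `C`, and
`e` is a normalized pairwise disjoint `1`-symmetric sequence, then the dilation operator `D_n`
(sending `e i` to the block `∑_{j<n} e (i*n+j)`) satisfies `‖D_n x‖ ≤ C n^{1/p} ‖x‖`. -/

theorem statement4 {X : Type*} [NormedAddCommGroup X] [Lattice X] [HasSolidNorm X]
    [IsOrderedAddMonoid X] [NormedSpace ℝ X]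
    [PosSMulStrictMono ℝ X] [CompleteSpace X] (p C : ℝ) (hp : 1 < p) (hC : 0 < C)
    (hUDS : ∀ x : ℕ → X, IsNormalizedSeq x → IsDisjointSeq x →
      ∃ φ : ℕ → ℕ, StrictMono φ ∧ HasUpperEstimate p C (x ∘ φ))
    (e : ℕ → X) (hnorm : IsNormalizedSeq e) (hdisj : IsDisjointSeq e)
    (hsymm : ∀ σ : ℕ → ℕ, Function.Injective σ → ∀ (k : ℕ) (a : ℕ → ℝ),
      ‖∑ i ∈ Finset.range k, a i • e (σ i)‖ = ‖∑ i ∈ Finset.range k, a i • e i‖)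
    (n k : ℕ) (a : ℕ → ℝ) :
    ‖∑ i ∈ Finset.range k, a i • (∑ j ∈ Finset.range n, e (i * n + j))‖
      ≤ C * (n : ℝ) ^ (1 / p) * ‖∑ i ∈ Finset.range k, a i • e i‖ := by
  have hp0 : p ≠ 0 := by linarith
  rcases Nat.eq_zero_or_pos n with hn | hn
  · subst hn
    simp only [Finset.range_zero, Finset.sum_empty, smul_zero, Finset.sum_const_zero, norm_zero]
    positivity
  rcases Nat.eq_zero_or_pos k with hk | hk
  · subst hk
    simp only [Finset.range_zero, Finset.sum_empty, norm_zero]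
    positivity
  set x := ∑ i ∈ Finset.range k, a i • e i with hxdef
  set b : ℕ → ℝ := fun ℓ => a (ℓ % k) with hb
  -- index arithmetic
  have hmod : ∀ j i, i < k → (j * k + i) % k = i := by
    intro j i hi
    rw [mul_comm, Nat.mul_add_mod]
    exact Nat.mod_eq_of_lt hi
  have hdiv : ∀ j i, i < k → (j * k + i) / k = j := by
    intro j i hi
    rw [mul_comm, Nat.mul_add_div hk, Nat.div_eq_of_lt hi, add_zero]
  have hlt : ∀ j i, j < n → i < k → j * k + i < n * k := by
    intro j i hj hi
    calc j * k + i < j * k + k := by omega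
      _ = (j + 1) * k := by ring
      _ ≤ n * k := Nat.mul_le_mul_right k hj
  -- the permutation σ2
  set σ2 : ℕ → ℕ := fun ℓ => if ℓ < n * k then (ℓ % k) * n + ℓ / k else ℓ with hσ2def
  have hσ2 : Function.Injective σ2 := by
    apply Function.LeftInverse.injective
      (g := fun m => if m < k * n then (m % n) * k + m / n else m)
    intro ℓ
    by_cases hℓ : ℓ < n * k
    · have hi : ℓ % k < k := Nat.mod_lt _ hk
      have hj : ℓ / k < n := (Nat.div_lt_iff_lt_mul hk).2 hℓ
      have h2 : (ℓ % k) * n + ℓ / k < k * n := by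
        calc (ℓ % k) * n + ℓ / k < (ℓ % k) * n + n := by omega
          _ = (ℓ % k + 1) * n := by ring
          _ ≤ k * n := Nat.mul_le_mul_right n hi
      simp only [hσ2def, if_pos hℓ, if_pos h2]
      rw [mul_comm (ℓ % k) n, Nat.mul_add_mod, Nat.mod_eq_of_lt hj, Nat.mul_add_div hn,
        Nat.div_eq_of_lt hj, add_zero]
      calc ℓ / k * k + ℓ % k = k * (ℓ / k) + ℓ % k := by ring_nf
        _ = ℓ := Nat.div_add_mod ℓ k
    · simp only [hσ2def, if_neg hℓ]
      rw [if_neg (by rw [mul_comm k n]; exact hℓ)]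
  have hσ2v : ∀ j i, j < n → i < k → σ2 (j * k + i) = i * n + j := by
    intro j i hj hi
    simp only [hσ2def, if_pos (hlt j i hj hi)]
    rw [hmod j i hi, hdiv j i hi]
  -- LHS rewrite
  have key1 : ∑ i ∈ Finset.range k, a i • (∑ j ∈ Finset.range n, e (i * n + j))
      = ∑ ℓ ∈ Finset.range (n * k), b ℓ • e (σ2 ℓ) := by
    rw [my_sum_grid]
    have h1 : ∀ j ∈ Finset.range n, ∀ i ∈ Finset.range k,
        b (j * k + i) • e (σ2 (j * k + i)) = a i • e (i * n + j) := by
      intro j hj i hi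
      rw [hσ2v j i (Finset.mem_range.1 hj) (Finset.mem_range.1 hi)]
      congr 1
      simp only [hb]
      rw [hmod j i (Finset.mem_range.1 hi)]
    calc ∑ i ∈ Finset.range k, a i • (∑ j ∈ Finset.range n, e (i * n + j))
        = ∑ i ∈ Finset.range k, ∑ j ∈ Finset.range n, a i • e (i * n + j) := by
          apply Finset.sum_congr rfl; intro i _; rw [Finset.smul_sum]
      _ = ∑ j ∈ Finset.range n, ∑ i ∈ Finset.range k, a i • e (i * n + j) :=
          Finset.sum_comm
      _ = ∑ j ∈ Finset.range n, ∑ i ∈ Finset.range k,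
            b (j * k + i) • e (σ2 (j * k + i)) := by
          apply Finset.sum_congr rfl; intro j hj
          apply Finset.sum_congr rfl; intro i hi
          exact (h1 j hj i hi).symm
  have keynorm : ‖∑ i ∈ Finset.range k, a i • (∑ j ∈ Finset.range n, e (i * n + j))‖
      = ‖∑ ℓ ∈ Finset.range (n * k), b ℓ • e ℓ‖ := by
    rw [key1]
    exact hsymm σ2 hσ2 (n * k) b
  -- shift invariance of the norm
  have shiftnorm : ∀ m : ℕ, ‖∑ i ∈ Finset.range k, a i • e (m * k + i)‖ = ‖x‖ := by
    intro m
    exact hsymm (fun i => m * k + i) (fun i i' h => by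
      have h2 : m * k + i = m * k + i' := h
      exact Nat.add_left_cancel h2) k a
  -- plain grid sum splits into n blocks
  have plain_split : ∑ ℓ ∈ Finset.range (n * k), b ℓ • e ℓ
      = ∑ j ∈ Finset.range n, ∑ i ∈ Finset.range k, a i • e (j * k + i) := by
    rw [my_sum_grid]
    apply Finset.sum_congr rfl; intro j hj
    apply Finset.sum_congr rfl; intro i hi
    congr 1
    simp only [hb]
    rw [hmod j i (Finset.mem_range.1 hi)]
  rcases eq_or_ne ‖x‖ 0 with hx | hx
  · -- degenerate case
    have h0 : ‖∑ ℓ ∈ Finset.range (n * k), b ℓ • e ℓ‖ ≤ 0 := by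
      rw [plain_split]
      calc ‖∑ j ∈ Finset.range n, ∑ i ∈ Finset.range k, a i • e (j * k + i)‖
          ≤ ∑ j ∈ Finset.range n, ‖∑ i ∈ Finset.range k, a i • e (j * k + i)‖ :=
            norm_sum_le _ _
        _ = ∑ j ∈ Finset.range n, ‖x‖ := by
            apply Finset.sum_congr rfl; intro j _; exact shiftnorm j
        _ = 0 := by rw [hx]; simp
    rw [keynorm, hx, mul_zero]
    exact h0
  -- main case
  have hxpos : 0 < ‖x‖ := lt_of_le_of_ne (norm_nonneg x) (Ne.symm hx)
  set z : ℕ → X := fun m => ‖x‖⁻¹ • ∑ i ∈ Finset.range k, a i • e (m * k + i) with hz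
  have hz1 : IsNormalizedSeq z := by
    intro m
    simp only [hz]
    rw [norm_smul, Real.norm_eq_abs, abs_of_nonneg (inv_nonneg.2 hxpos.le), shiftnorm m,
      inv_mul_cancel₀ hx]
  have hz2 : IsDisjointSeq z := by
    intro m m' hmm
    simp only [hz]
    rw [my_abs_smul, my_abs_smul, abs_of_nonneg (inv_nonneg.2 hxpos.le),
      ← my_smul_inf _ (inv_pos.2 hxpos),
      my_blocks_disjoint e hdisj k hk a m m' hmm, smul_zero]
  obtain ⟨φ, hφ, hest⟩ := hUDS z hz1 hz2
  -- σ1 : the subsequence-block injection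
  set σ1 : ℕ → ℕ := fun ℓ => φ (ℓ / k) * k + ℓ % k with hσ1def
  have hσ1 : Function.Injective σ1 := by
    intro ℓ ℓ' h
    simp only [hσ1def] at h
    have hm : ℓ % k = ℓ' % k := by
      rw [← hmod (φ (ℓ / k)) (ℓ % k) (Nat.mod_lt ℓ hk),
        ← hmod (φ (ℓ' / k)) (ℓ' % k) (Nat.mod_lt ℓ' hk), h]
    have hd : φ (ℓ / k) = φ (ℓ' / k) := by
      rw [hm] at h
      have := Nat.add_right_cancel h
      exact Nat.eq_of_mul_eq_mul_right hk this
    have hdd : ℓ / k = ℓ' / k := hφ.injective hd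
    calc ℓ = k * (ℓ / k) + ℓ % k := (Nat.div_add_mod ℓ k).symm
      _ = k * (ℓ' / k) + ℓ' % k := by rw [hdd, hm]
      _ = ℓ' := Nat.div_add_mod ℓ' k
  have hσ1v : ∀ j i, j < n → i < k → σ1 (j * k + i) = φ j * k + i := by
    intro j i hj hi
    simp only [hσ1def]
    rw [hmod j i hi, hdiv j i hi]
  -- the estimate
  have est := hest n (fun _ => ‖x‖)
  have lhs_eq : ∑ j ∈ Finset.range n, (fun _ => ‖x‖) j • (z ∘ φ) j
      = ∑ ℓ ∈ Finset.range (n * k), b ℓ • e (σ1 ℓ) := by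
    rw [my_sum_grid]
    apply Finset.sum_congr rfl; intro j hj
    have : (fun _ => ‖x‖) j • (z ∘ φ) j = ∑ i ∈ Finset.range k, a i • e (φ j * k + i) := by
      simp only [Function.comp_apply, hz]
      rw [smul_smul, mul_inv_cancel₀ hx, one_smul]
    rw [this]
    apply Finset.sum_congr rfl; intro i hi
    rw [hσ1v j i (Finset.mem_range.1 hj) (Finset.mem_range.1 hi)]
    congr 1
    simp only [hb]
    rw [hmod j i (Finset.mem_range.1 hi)]
  rw [lhs_eq] at est
  rw [hsymm σ1 hσ1 (n * k) b] at est
  -- compute the right-hand side of est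
  have rhs_eq : (∑ j ∈ Finset.range n, |(fun _ => ‖x‖) j| ^ p) ^ (1 / p)
      = (n : ℝ) ^ (1 / p) * ‖x‖ := by
    simp only [abs_of_nonneg (norm_nonneg x)]
    rw [Finset.sum_const, Finset.card_range, nsmul_eq_mul,
      Real.mul_rpow (Nat.cast_nonneg n) (Real.rpow_nonneg (norm_nonneg x) p),
      ← Real.rpow_mul (norm_nonneg x), mul_one_div_cancel hp0, Real.rpow_one]
  rw [keynorm]
  calc ‖∑ ℓ ∈ Finset.range (n * k), b ℓ • e ℓ‖
      ≤ C * (∑ j ∈ Finset.range n, |(fun _ => ‖x‖) j| ^ p) ^ (1 / p) := est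
    _ = C * ((n : ℝ) ^ (1 / p) * ‖x‖) := by rw [rhs_eq]
    _ = C * (n : ℝ) ^ (1 / p) * ‖x‖ := by ring
end

section
/- Let 1 < p, q < ∞ and 1 < r < ∞, and consider Lebesgue measure on [0,∞). For a measurable function f belonging to both L_p[0,∞) and L_q[0,∞), set ‖f‖ = max(‖f‖_{L_p}, ‖f‖_{L_q}). Then the following are equivalent: (a) r ≤ min{p,q}; (b) there exists a constant C > 0 such that every sequence {f_n} of functions with f_n ∈ L_p ∩ L_q, ‖f_n‖ = 1, and pairwise almost everywhere disjoint supports (f_i · f_j = 0 a.e. for i ≠ j) has a subsequence {f_{n_k}} satisfying ‖Σ_{k=1}^m a_k f_{n_k}‖ ≤ C (Σ_{k=1}^m |a_k|^r)^{1/r} for all scalars a_1,…,a_m and all m. -/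
open MeasureTheory Finset
open scoped ENNReal NNReal

/-- Lebesgue measure on `[0,∞)`. -/
noncomputable def muHalfLine : Measure ℝ := volume.restrict (Set.Ici (0 : ℝ))

/-- Membership in `L_p[0,∞) ∩ L_q[0,∞)`. -/
def MemLpCapLq (p q : ℝ) (f : ℝ → ℝ) : Prop :=
  MemLp f (ENNReal.ofReal p) muHalfLine ∧ MemLp f (ENNReal.ofReal q) muHalfLine

/-- The norm of `L_p[0,∞) ∩ L_q[0,∞)`: `‖f‖ = max (‖f‖_{L_p}, ‖f‖_{L_q})`. -/
noncomputable def capNorm (p q : ℝ) (f : ℝ → ℝ) : ℝ :=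
  max (eLpNorm f (ENNReal.ofReal p) muHalfLine).toReal
      (eLpNorm f (ENNReal.ofReal q) muHalfLine).toReal

-- ===== auxiliary lemmas =====

lemma aux_pointwise (t : ℝ) (ht : 0 < t) (s : Finset ℕ) (x : ℕ → ℝ)
    (h : ∀ i ∈ s, ∀ j ∈ s, i ≠ j → x i * x j = 0) :
    ((‖∑ i ∈ s, x i‖₊ : ℝ≥0∞)) ^ t = ∑ i ∈ s, (‖x i‖₊ : ℝ≥0∞) ^ t := by
  induction s using Finset.induction_on with
  | empty => simp [ENNReal.zero_rpow_of_pos ht]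
  | @insert b s' ha ih =>
    rw [Finset.sum_insert ha, Finset.sum_insert ha]
    by_cases hxb : x b = 0
    · rw [hxb, zero_add]
      simp only [nnnorm_zero, ENNReal.coe_zero, ENNReal.zero_rpow_of_pos ht, zero_add]
      exact ih (fun i hi j hj hij => h i (Finset.mem_insert_of_mem hi) j
        (Finset.mem_insert_of_mem hj) hij)
    · have hz : ∀ i ∈ s', x i = 0 := by
        intro i hi
        have := h b (Finset.mem_insert_self _ _) i (Finset.mem_insert_of_mem hi)
          (fun e => ha (e ▸ hi))
        rcases mul_eq_zero.1 this with h' | h'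
        · exact absurd h' hxb
        · exact h'
      have h1 : ∑ i ∈ s', x i = 0 := Finset.sum_eq_zero hz
      have h2 : ∑ i ∈ s', (‖x i‖₊ : ℝ≥0∞) ^ t = 0 := by
        refine Finset.sum_eq_zero fun i hi => ?_
        simp [hz i hi, ENNReal.zero_rpow_of_pos ht]
      rw [h1, h2, add_zero, add_zero]

lemma aux_sum_rpow_le (t : ℝ) (ht : 1 ≤ t) (s : Finset ℕ) (c : ℕ → ℝ≥0∞) :
    ∑ i ∈ s, c i ^ t ≤ (∑ i ∈ s, c i) ^ t := by
  induction s using Finset.induction_on with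
  | empty => simp [ENNReal.zero_rpow_of_pos (lt_of_lt_of_le one_pos ht)]
  | @insert b s' ha ih =>
    rw [Finset.sum_insert ha, Finset.sum_insert ha]
    calc c b ^ t + ∑ i ∈ s', c i ^ t ≤ c b ^ t + (∑ i ∈ s', c i) ^ t := by
            exact add_le_add_right ih _
      _ ≤ (c b + ∑ i ∈ s', c i) ^ t := ENNReal.add_rpow_le_rpow_add _ _ ht

lemma aux_lintegral (t : ℝ) (ht : 0 < t) (μ : Measure ℝ) (m : ℕ) (g : ℕ → ℝ → ℝ)
    (hmeas : ∀ k, AEStronglyMeasurable (g k) μ)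
    (hdisj : ∀ᵐ x ∂μ, ∀ i j, i ≠ j → g i x * g j x = 0) :
    ∫⁻ x, (‖∑ k ∈ range m, g k x‖₊ : ℝ≥0∞) ^ t ∂μ
      = ∑ k ∈ range m, ∫⁻ x, (‖g k x‖₊ : ℝ≥0∞) ^ t ∂μ := by
  simp only [← enorm_eq_nnnorm]
  rw [← lintegral_finset_sum' _ (fun k _ =>
    ((hmeas k).aemeasurable.enorm.pow_const t))]
  refine lintegral_congr_ae ?_
  filter_upwards [hdisj] with x hx
  exact aux_pointwise t ht (range m) (fun k => g k x)
    (fun i _ j _ hij => hx i j hij)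

lemma aux_upper (s r : ℝ) (hs : 1 < s) (hr : 0 < r) (hrs : r ≤ s)
    (f : ℕ → ℝ → ℝ) (hf : ∀ n, MemLp (f n) (ENNReal.ofReal s) muHalfLine)
    (hnorm : ∀ n, (eLpNorm (f n) (ENNReal.ofReal s) muHalfLine).toReal ≤ 1)
    (hdisj : ∀ᵐ x ∂muHalfLine, ∀ i j, i ≠ j → f i x * f j x = 0)
    (m : ℕ) (a : ℕ → ℝ) :
    (eLpNorm (fun x => ∑ k ∈ range m, a k * f k x) (ENNReal.ofReal s) muHalfLine).toReal
      ≤ (∑ k ∈ range m, |a k| ^ r) ^ (1 / r) := by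
  have hs0 : (0:ℝ) < s := lt_trans one_pos hs
  have hpne : ENNReal.ofReal s ≠ 0 := by
    simp [ENNReal.ofReal_eq_zero, not_le, hs0]
  have hptop : ENNReal.ofReal s ≠ ∞ := ENNReal.ofReal_ne_top
  have htr : (ENNReal.ofReal s).toReal = s := ENNReal.toReal_ofReal hs0.le
  set S : ℝ≥0∞ := ∑ k ∈ range m, (‖a k‖₊ : ℝ≥0∞) ^ r with hS
  have hSne : S ≠ ∞ := by
    refine ENNReal.sum_ne_top.2 fun k _ =>
      (ENNReal.rpow_lt_top_of_nonneg hr.le ENNReal.coe_ne_top).ne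
  have key : eLpNorm (fun x => ∑ k ∈ range m, a k * f k x) (ENNReal.ofReal s) muHalfLine
      ≤ S ^ (1/r) := by
    rw [eLpNorm_eq_lintegral_rpow_enorm_toReal hpne hptop, htr]
    simp only [enorm_eq_nnnorm]
    have hdisj' : ∀ᵐ x ∂muHalfLine, ∀ i j, i ≠ j → (a i * f i x) * (a j * f j x) = 0 := by
      filter_upwards [hdisj] with x hx i j hij
      rw [mul_mul_mul_comm, hx i j hij, mul_zero]
    rw [aux_lintegral s hs0 muHalfLine m _
      (fun k => ((hf k).aestronglyMeasurable.const_mul (a k))) hdisj']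
    have hterm : ∀ k, ∫⁻ x, (‖a k * f k x‖₊ : ℝ≥0∞) ^ s ∂muHalfLine
        ≤ (‖a k‖₊ : ℝ≥0∞) ^ s := by
      intro k
      have : ∀ x, ((‖a k * f k x‖₊ : ℝ≥0∞)) ^ s
          = (‖a k‖₊ : ℝ≥0∞) ^ s * (‖f k x‖₊ : ℝ≥0∞) ^ s := by
        intro x
        rw [nnnorm_mul, ENNReal.coe_mul, ENNReal.mul_rpow_of_nonneg _ _ hs0.le]
      simp_rw [this]
      simp only [← enorm_eq_nnnorm]
      rw [lintegral_const_mul'' _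
        ((hf k).aestronglyMeasurable.aemeasurable.enorm.pow_const s)]
      have hle1 : eLpNorm (f k) (ENNReal.ofReal s) muHalfLine ≤ 1 := by
        have hne := (hf k).eLpNorm_ne_top
        exact (ENNReal.toReal_le_toReal hne ENNReal.one_ne_top).1 (by simpa using hnorm k)
      have hint : ∫⁻ x, (‖f k x‖₊ : ℝ≥0∞) ^ s ∂muHalfLine ≤ 1 := by
        have heq : eLpNorm (f k) (ENNReal.ofReal s) muHalfLine
            = (∫⁻ x, (‖f k x‖₊ : ℝ≥0∞) ^ s ∂muHalfLine) ^ (1/s) := by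
          rw [eLpNorm_eq_lintegral_rpow_enorm_toReal hpne hptop, htr]
          rfl
        have h2 : (∫⁻ x, (‖f k x‖₊ : ℝ≥0∞) ^ s ∂muHalfLine) ^ (1/s) ≤ 1 := heq ▸ hle1
        have := ENNReal.rpow_le_rpow h2 hs0.le
        rwa [← ENNReal.rpow_mul, one_div, inv_mul_cancel₀ hs0.ne', ENNReal.rpow_one,
          ENNReal.one_rpow] at this
      calc (‖a k‖₊ : ℝ≥0∞) ^ s * ∫⁻ x, (‖f k x‖₊ : ℝ≥0∞) ^ s ∂muHalfLine
          ≤ (‖a k‖₊ : ℝ≥0∞) ^ s * 1 := mul_le_mul_right hint _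
        _ = (‖a k‖₊ : ℝ≥0∞) ^ s := mul_one _
    have h3 : ∑ k ∈ range m, ∫⁻ x, (‖a k * f k x‖₊ : ℝ≥0∞) ^ s ∂muHalfLine
        ≤ ∑ k ∈ range m, ((‖a k‖₊ : ℝ≥0∞) ^ r) ^ (s/r) := by
      refine Finset.sum_le_sum fun k _ => (hterm k).trans_eq ?_
      rw [← ENNReal.rpow_mul, mul_div_cancel₀ _ hr.ne']
    have h4 : ∑ k ∈ range m, ((‖a k‖₊ : ℝ≥0∞) ^ r) ^ (s/r) ≤ S ^ (s/r) :=
      aux_sum_rpow_le (s/r) ((one_le_div hr).2 hrs) _ _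
    have h5 := ENNReal.rpow_le_rpow (le_trans h3 h4) (by positivity : (0:ℝ) ≤ 1/s)
    rw [← ENNReal.rpow_mul] at h5
    have hexp : s / r * (1 / s) = 1 / r := by
      field_simp
    rwa [hexp] at h5
  have hRHS : (S ^ (1/r)).toReal = (∑ k ∈ range m, |a k| ^ r) ^ (1/r) := by
    rw [← ENNReal.toReal_rpow]
    congr 1
    rw [ENNReal.toReal_sum
      (fun k _ => (ENNReal.rpow_lt_top_of_nonneg hr.le ENNReal.coe_ne_top).ne)]
    refine Finset.sum_congr rfl fun k _ => ?_
    rw [← ENNReal.toReal_rpow]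
    simp [Real.norm_eq_abs]
  calc (eLpNorm (fun x => ∑ k ∈ range m, a k * f k x) (ENNReal.ofReal s) muHalfLine).toReal
      ≤ (S ^ (1/r)).toReal := ENNReal.toReal_mono
        (ENNReal.rpow_lt_top_of_nonneg (by positivity) hSne).ne key
    _ = _ := hRHS

-- ===== backward direction : the indicator sequence =====

noncomputable def fInd (n : ℕ) : ℝ → ℝ := (Set.Ico (n:ℝ) (n+1)).indicator (fun _ => 1)

lemma fInd_measure (n : ℕ) : muHalfLine (Set.Ico (n:ℝ) (n+1)) = 1 := by
  rw [muHalfLine, Measure.restrict_apply measurableSet_Ico]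
  have : Set.Ico (n:ℝ) (n+1) ∩ Set.Ici 0 = Set.Ico (n:ℝ) (n+1) := by
    refine Set.inter_eq_left.2 fun x hx => le_trans (Nat.cast_nonneg n) hx.1
  rw [this, Real.volume_Ico]
  simp

lemma fInd_memℒp (s : ℝ) (n : ℕ) : MemLp (fInd n) (ENNReal.ofReal s) muHalfLine := by
  refine memLp_indicator_const _ measurableSet_Ico 1 (Or.inr ?_)
  rw [fInd_measure]
  exact ENNReal.one_ne_top

lemma fInd_eLpNorm (s : ℝ) (hs : 0 < s) (n : ℕ) :
    eLpNorm (fInd n) (ENNReal.ofReal s) muHalfLine = 1 := by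
  rw [fInd, eLpNorm_indicator_const measurableSet_Ico
    (by simp [ENNReal.ofReal_eq_zero, not_le, hs]) ENNReal.ofReal_ne_top, fInd_measure]
  simp

lemma fInd_disj (i j : ℕ) (hij : i ≠ j) (x : ℝ) : fInd i x * fInd j x = 0 := by
  by_cases hi : x ∈ Set.Ico (i:ℝ) (i+1)
  · have hj : x ∉ Set.Ico (j:ℝ) (j+1) := by
      intro hj
      apply hij
      have h1 : (i:ℝ) < j + 1 := lt_of_le_of_lt hi.1 hj.2
      have h2 : (j:ℝ) < i + 1 := lt_of_le_of_lt hj.1 hi.2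
      have h1' : i ≤ j := by exact_mod_cast Nat.lt_succ_iff.1 (by exact_mod_cast h1)
      have h2' : j ≤ i := by exact_mod_cast Nat.lt_succ_iff.1 (by exact_mod_cast h2)
      omega
    simp only [fInd]
    rw [Set.indicator_of_notMem hj, mul_zero]
  · simp only [fInd]
    rw [Set.indicator_of_notMem hi, zero_mul]

lemma fInd_sum_eLpNorm (s : ℝ) (hs : 1 < s) (φ : ℕ → ℕ) (hφ : Function.Injective φ) (m : ℕ) :
    (eLpNorm (fun x => ∑ k ∈ range m, (1:ℝ) * fInd (φ k) x)
      (ENNReal.ofReal s) muHalfLine).toReal = (m : ℝ) ^ (1 / s) := by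
  have hs0 : (0:ℝ) < s := lt_trans one_pos hs
  have hpne : ENNReal.ofReal s ≠ 0 := by simp [ENNReal.ofReal_eq_zero, not_le, hs0]
  have htr : (ENNReal.ofReal s).toReal = s := ENNReal.toReal_ofReal hs0.le
  have hint : ∀ n, ∫⁻ x, (‖fInd n x‖₊ : ℝ≥0∞) ^ s ∂muHalfLine = 1 := by
    intro n
    have heq : eLpNorm (fInd n) (ENNReal.ofReal s) muHalfLine
        = (∫⁻ x, (‖fInd n x‖₊ : ℝ≥0∞) ^ s ∂muHalfLine) ^ (1/s) := by
      rw [eLpNorm_eq_lintegral_rpow_enorm_toReal hpne ENNReal.ofReal_ne_top, htr]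
      rfl
    have h1 : (∫⁻ x, (‖fInd n x‖₊ : ℝ≥0∞) ^ s ∂muHalfLine) ^ (1/s) = 1 := by
      rw [← heq, fInd_eLpNorm s hs0]
    have := congrArg (· ^ s) h1
    simpa [← ENNReal.rpow_mul, one_div, inv_mul_cancel₀ hs0.ne'] using this
  rw [eLpNorm_eq_lintegral_rpow_enorm_toReal hpne ENNReal.ofReal_ne_top, htr]
  simp only [enorm_eq_nnnorm]
  have hmeas : ∀ k, AEStronglyMeasurable (fun x => (1:ℝ) * fInd (φ k) x) muHalfLine := by
    intro k
    exact ((fInd_memℒp s (φ k)).aestronglyMeasurable.const_mul 1)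
  have hdisj : ∀ᵐ x ∂muHalfLine, ∀ i j, i ≠ j →
      ((1:ℝ) * fInd (φ i) x) * ((1:ℝ) * fInd (φ j) x) = 0 := by
    refine Filter.Eventually.of_forall fun x i j hij => ?_
    rw [one_mul, one_mul]
    exact fInd_disj _ _ (fun e => hij (hφ e)) x
  rw [aux_lintegral s hs0 muHalfLine m _ hmeas hdisj]
  have : ∀ k ∈ range m, ∫⁻ x, (‖(1:ℝ) * fInd (φ k) x‖₊ : ℝ≥0∞) ^ s ∂muHalfLine = 1 := by
    intro k _
    simp_rw [one_mul]
    exact hint (φ k)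
  rw [Finset.sum_congr rfl this, Finset.sum_const, card_range, nsmul_eq_mul, mul_one]
  rw [← ENNReal.toReal_rpow]
  simp

/-- Corollary 2(i) for `L_p ∩ L_q` on `[0,∞)`: the space has the `UDS_r`-property iff
`r ≤ min {p, q}`. -/
theorem statement8 (p q r : ℝ) (hp : 1 < p) (hq : 1 < q) (hr : 1 < r) :
    r ≤ min p q ↔
    ∃ C : ℝ, 0 < C ∧ ∀ f : ℕ → ℝ → ℝ,
      (∀ n, MemLpCapLq p q (f n)) →
      (∀ n, capNorm p q (f n) = 1) →
      (∀ i j, i ≠ j → ∀ᵐ t ∂muHalfLine, f i t * f j t = 0) →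
      ∃ φ : ℕ → ℕ, StrictMono φ ∧ ∀ (m : ℕ) (a : ℕ → ℝ),
        capNorm p q (fun t => ∑ k ∈ Finset.range m, a k * f (φ k) t)
          ≤ C * (∑ k ∈ Finset.range m, |a k| ^ r) ^ (1 / r) := by
  constructor
  · -- (a) → (b)
    intro hmin
    refine ⟨1, one_pos, fun f hmem hnorm hdisj => ⟨id, strictMono_id, fun m a => ?_⟩⟩
    have hdisj' : ∀ᵐ x ∂muHalfLine, ∀ i j, i ≠ j → f i x * f j x = 0 := by
      rw [MeasureTheory.ae_all_iff]
      intro i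
      rw [MeasureTheory.ae_all_iff]
      intro j
      by_cases hij : i = j
      · subst hij
        exact Filter.Eventually.of_forall fun x h => absurd rfl h
      · filter_upwards [hdisj i j hij] with x hx _
        exact hx
    have hr0 : (0:ℝ) < r := lt_trans one_pos hr
    rw [one_mul, capNorm, max_le_iff]
    constructor
    · exact aux_upper p r hp hr0 (le_trans hmin (min_le_left _ _)) f
        (fun n => (hmem n).1)
        (fun n => le_trans (le_max_left _ _) (le_of_eq (hnorm n))) hdisj' m a
    · exact aux_upper q r hq hr0 (le_trans hmin (min_le_right _ _)) f
        (fun n => (hmem n).2)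
        (fun n => le_trans (le_max_right _ _) (le_of_eq (hnorm n))) hdisj' m a
  · -- (b) → (a), by contradiction
    rintro ⟨C, hC, H⟩
    by_contra hcon
    push_neg at hcon
    set s0 : ℝ := min p q with hs0def
    have hs01 : 1 < s0 := lt_min hp hq
    obtain ⟨φ, hφ, hineq⟩ := H fInd
      (fun n => ⟨fInd_memℒp p n, fInd_memℒp q n⟩)
      (fun n => by
        rw [capNorm, fInd_eLpNorm p (lt_trans one_pos hp) n,
          fInd_eLpNorm q (lt_trans one_pos hq) n]
        simp)
      (fun i j hij => Filter.Eventually.of_forall (fInd_disj i j hij))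
    -- contradiction for large m
    have hδ : (0:ℝ) < 1/s0 - 1/r := by
      have : 1/r < 1/s0 := by
        apply one_div_lt_one_div_of_lt (lt_trans one_pos hs01) hcon
      linarith
    obtain ⟨m, hm⟩ := (((tendsto_rpow_atTop hδ).comp
      tendsto_natCast_atTop_atTop).eventually_gt_atTop C).and
      (Filter.eventually_ge_atTop 1) |>.exists
    obtain ⟨hmC, hm1⟩ := hm
    have hm0 : (0:ℝ) < (m:ℝ) := lt_of_lt_of_le one_pos (by exact_mod_cast hm1)
    have hkey := hineq m (fun _ => 1)
    have hRHS : (∑ k ∈ Finset.range m, |(1:ℝ)| ^ r) ^ (1/r) = (m:ℝ) ^ (1/r) := by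
      simp
    have hcap : capNorm p q (fun t => ∑ k ∈ Finset.range m, (1:ℝ) * fInd (φ k) t)
        = max ((m:ℝ) ^ (1/p)) ((m:ℝ) ^ (1/q)) := by
      rw [capNorm, fInd_sum_eLpNorm p hp φ hφ.injective m,
        fInd_sum_eLpNorm q hq φ hφ.injective m]
    rw [hcap, hRHS] at hkey
    have hlow : (m:ℝ) ^ (1/s0) ≤ max ((m:ℝ) ^ (1/p)) ((m:ℝ) ^ (1/q)) := by
      rcases min_le_iff.1 (le_refl s0) with h | h
      · rcases le_total p q with hpq | hpq
        · rw [hs0def, min_eq_left hpq]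
          exact le_max_left _ _
        · rw [hs0def, min_eq_right hpq]
          exact le_max_right _ _
      · rcases le_total p q with hpq | hpq
        · rw [hs0def, min_eq_left hpq]
          exact le_max_left _ _
        · rw [hs0def, min_eq_right hpq]
          exact le_max_right _ _
    have h1 : (m:ℝ) ^ (1/s0) ≤ C * (m:ℝ) ^ (1/r) := le_trans hlow hkey
    have hsplit : (m:ℝ) ^ (1/s0) = (m:ℝ) ^ (1/s0 - 1/r) * (m:ℝ) ^ (1/r) := by
      rw [← Real.rpow_add hm0]
      ring_nf
    rw [hsplit] at h1
    have hpos : (0:ℝ) < (m:ℝ) ^ (1/r) := Real.rpow_pos_of_pos hm0 _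
    have h2 : (m:ℝ) ^ (1/s0 - 1/r) ≤ C := by
      have := (mul_le_mul_iff_of_pos_right hpos).1 h1
      exact this
    have : C < (m:ℝ) ^ (1/s0 - 1/r) := by
      simpa [Function.comp] using hmC
    linarith
end

section
/- Let 1 < p, q < ∞ and 1 < r < ∞, and consider Lebesgue measure on [0,∞). For a measurable function f belonging to both L_p[0,∞) and L_q[0,∞), set ‖f‖ = max(‖f‖_{L_p}, ‖f‖_{L_q}). Then the following are equivalent: (a) r ≥ max{p,q}; (b) there exists a constant C > 0 such that every sequence {f_n} of functions with f_n ∈ L_p ∩ L_q, ‖f_n‖ = 1, and pairwise almost everywhere disjoint supports (f_i · f_j = 0 a.e. for i ≠ j) has a subsequence {f_{n_k}} satisfying C (Σ_{k=1}^m |a_k|^r)^{1/r} ≤ ‖Σ_{k=1}^m a_k f_{n_k}‖ for all scalars a_1,…,a_m and all m. -/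
open MeasureTheory Finset
open scoped ENNReal NNReal

/-- Monotonicity of `ℓ_p` norms on finite sums. -/
lemma lpMono (s : Finset ℕ) (x : ℕ → ℝ) (hx : ∀ k, 0 ≤ x k) {u r : ℝ} (hu : 0 < u)
    (hur : u ≤ r) : (∑ k ∈ s, x k ^ r) ^ (1/r) ≤ (∑ k ∈ s, x k ^ u) ^ (1/u) := by
  have hr : 0 < r := hu.trans_le hur
  set S : ℝ := (∑ k ∈ s, x k ^ u) ^ (1/u) with hS
  have hsum_nonneg : 0 ≤ ∑ k ∈ s, x k ^ u :=
    Finset.sum_nonneg fun k _ => Real.rpow_nonneg (hx k) u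
  have hSnn : 0 ≤ S := Real.rpow_nonneg hsum_nonneg _
  have hSu : S ^ u = ∑ k ∈ s, x k ^ u := by
    rw [hS, ← Real.rpow_mul hsum_nonneg, one_div_mul_cancel hu.ne', Real.rpow_one]
  have hxS : ∀ k ∈ s, x k ≤ S := by
    intro k hk
    have h1 : x k ^ u ≤ S ^ u := by
      rw [hSu]; exact Finset.single_le_sum (fun j _ => Real.rpow_nonneg (hx j) u) hk
    have := Real.rpow_le_rpow (Real.rpow_nonneg (hx k) u) h1 (le_of_lt (by positivity : (0:ℝ) < 1/u))
    rwa [← Real.rpow_mul (hx k), ← Real.rpow_mul hSnn, mul_one_div_cancel hu.ne',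
      Real.rpow_one, Real.rpow_one] at this
  have key : ∑ k ∈ s, x k ^ r ≤ S ^ r := by
    calc ∑ k ∈ s, x k ^ r ≤ ∑ k ∈ s, x k ^ u * S ^ (r - u) := by
          apply Finset.sum_le_sum
          intro k hk
          rcases eq_or_lt_of_le (hx k) with h0 | h0
          · rw [← h0]
            rw [Real.zero_rpow hr.ne']
            positivity
          · have heq : x k ^ r = x k ^ u * x k ^ (r - u) := by
              rw [← Real.rpow_add h0]; ring_nf
            rw [heq]
            exact mul_le_mul_of_nonneg_left
              (Real.rpow_le_rpow (hx k) (hxS k hk) (sub_nonneg.2 hur))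
              (Real.rpow_nonneg (hx k) u)
      _ = S ^ (r - u) * ∑ k ∈ s, x k ^ u := by
          rw [Finset.mul_sum]; apply Finset.sum_congr rfl; intros; ring
      _ = S ^ (r - u) * S ^ u := by rw [hSu]
      _ = S ^ r := by
          rcases eq_or_lt_of_le hSnn with h0 | h0
          · rcases eq_or_lt_of_le hur with h1 | h1
            · rw [← h0]; simp [Real.zero_rpow hu.ne', ← h1]
            · rw [← h0]; rw [Real.zero_rpow hu.ne', Real.zero_rpow hr.ne']; ring
          · rw [← Real.rpow_add h0]; ring_nf
  calc (∑ k ∈ s, x k ^ r) ^ (1/r) ≤ (S ^ r) ^ (1/r) := by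
        apply Real.rpow_le_rpow (Finset.sum_nonneg fun k _ => Real.rpow_nonneg (hx k) r) key
        positivity
    _ = S := by rw [← Real.rpow_mul hSnn, mul_one_div_cancel hr.ne', Real.rpow_one]

lemma disjSum (μ : Measure ℝ) (u : ℝ) (hu : 0 < u) (f : ℕ → ℝ → ℝ)
    (hmeas : ∀ n, AEMeasurable (f n) μ)
    (hdisj : ∀ i j, i ≠ j → ∀ᵐ t ∂μ, f i t * f j t = 0) (m : ℕ) (a : ℕ → ℝ) :
    ∫⁻ t, (‖(∑ k ∈ range m, a k * f k t)‖₊ : ℝ≥0∞) ^ u ∂μ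
      = ∑ k ∈ range m, ∫⁻ t, (‖a k * f k t‖₊ : ℝ≥0∞) ^ u ∂μ := by
  have hae : ∀ᵐ t ∂μ, ∀ i j, i ≠ j → f i t * f j t = 0 := by
    rw [ae_all_iff]; intro i; rw [ae_all_iff]; intro j
    rcases eq_or_ne i j with h | h
    · exact Filter.Eventually.of_forall fun t hne => absurd h hne
    · exact (hdisj i j h).mono fun t ht _ => ht
  rw [← lintegral_finset_sum' _ (fun k _ =>
    (((hmeas k).const_mul (a k)).nnnorm.coe_nnreal_ennreal.pow_const u))]
  refine lintegral_congr_ae (hae.mono fun t ht => ?_)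
  show (‖(∑ k ∈ range m, a k * f k t)‖₊ : ℝ≥0∞) ^ u
      = ∑ k ∈ range m, (‖a k * f k t‖₊ : ℝ≥0∞) ^ u
  by_cases hex : ∃ k ∈ range m, f k t ≠ 0
  · obtain ⟨k0, hk0m, hk0⟩ := hex
    have hzero : ∀ j ∈ range m, j ≠ k0 → f j t = 0 := by
      intro j hj hne
      have := ht j k0 hne
      rcases mul_eq_zero.1 this with h | h
      · exact h
      · exact absurd h hk0
    have h1 : ∑ k ∈ range m, a k * f k t = a k0 * f k0 t :=
      Finset.sum_eq_single_of_mem k0 hk0m fun j hj hne => by rw [hzero j hj hne, mul_zero]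
    have h2 : ∑ k ∈ range m, (‖a k * f k t‖₊ : ℝ≥0∞) ^ u = (‖a k0 * f k0 t‖₊ : ℝ≥0∞) ^ u :=
      Finset.sum_eq_single_of_mem k0 hk0m fun j hj hne => by
        rw [hzero j hj hne, mul_zero, nnnorm_zero, ENNReal.coe_zero,
          ENNReal.zero_rpow_of_pos hu]
    rw [h1, h2]
  · push_neg at hex
    have h1 : ∑ k ∈ range m, a k * f k t = 0 :=
      Finset.sum_eq_zero fun j hj => by rw [hex j hj, mul_zero]
    rw [h1]
    rw [nnnorm_zero, ENNReal.coe_zero, ENNReal.zero_rpow_of_pos hu]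
    exact (Finset.sum_eq_zero fun j hj => by
      rw [hex j hj, mul_zero, nnnorm_zero, ENNReal.coe_zero,
        ENNReal.zero_rpow_of_pos hu]).symm

lemma normSumE (μ : Measure ℝ) (u : ℝ) (hu : 0 < u) (f : ℕ → ℝ → ℝ)
    (hmeas : ∀ n, AEMeasurable (f n) μ)
    (hdisj : ∀ i j, i ≠ j → ∀ᵐ t ∂μ, f i t * f j t = 0) (m : ℕ) (a : ℕ → ℝ) :
    eLpNorm (fun t => ∑ k ∈ range m, a k * f k t) (ENNReal.ofReal u) μ
      = (∑ k ∈ range m, ((‖a k‖₊ : ℝ≥0∞) * eLpNorm (f k) (ENNReal.ofReal u) μ) ^ u) ^ (1/u) := by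
  have hP0 : ENNReal.ofReal u ≠ 0 := (ENNReal.ofReal_pos.2 hu).ne'
  have hPt : ENNReal.ofReal u ≠ ∞ := ENNReal.ofReal_ne_top
  have hPtoReal : (ENNReal.ofReal u).toReal = u := ENNReal.toReal_ofReal hu.le
  rw [eLpNorm_eq_lintegral_rpow_enorm_toReal hP0 hPt, hPtoReal]
  simp only [enorm_eq_nnnorm]
  rw [disjSum μ u hu f hmeas hdisj m a]
  congr 1
  refine Finset.sum_congr rfl fun k _ => ?_
  have h1 : eLpNorm (fun t => a k * f k t) (ENNReal.ofReal u) μ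
      = (‖a k‖₊ : ℝ≥0∞) * eLpNorm (f k) (ENNReal.ofReal u) μ := by
    have : (fun t => a k * f k t) = (a k) • (f k) := by
      funext t; simp [smul_eq_mul]
    rw [this, eLpNorm_const_smul, enorm_eq_nnnorm]
  rw [← h1, eLpNorm_eq_lintegral_rpow_enorm_toReal hP0 hPt, hPtoReal,
    ← ENNReal.rpow_mul, one_div_mul_cancel hu.ne', ENNReal.rpow_one]
  simp only [enorm_eq_nnnorm]

lemma normSumR (μ : Measure ℝ) (u : ℝ) (hu : 0 < u) (f : ℕ → ℝ → ℝ)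
    (hmem : ∀ n, MemLp (f n) (ENNReal.ofReal u) μ)
    (hdisj : ∀ i j, i ≠ j → ∀ᵐ t ∂μ, f i t * f j t = 0) (m : ℕ) (a : ℕ → ℝ) :
    (eLpNorm (fun t => ∑ k ∈ range m, a k * f k t) (ENNReal.ofReal u) μ).toReal
      = (∑ k ∈ range m, (|a k| * (eLpNorm (f k) (ENNReal.ofReal u) μ).toReal) ^ u) ^ (1/u) := by
  rw [normSumE μ u hu f (fun n => (hmem n).aestronglyMeasurable.aemeasurable) hdisj m a]
  rw [← ENNReal.toReal_rpow]
  congr 1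
  rw [ENNReal.toReal_sum (fun k _ => ENNReal.rpow_ne_top_of_nonneg hu.le
    (ENNReal.mul_ne_top ENNReal.coe_ne_top (hmem (k)).eLpNorm_ne_top))]
  refine Finset.sum_congr rfl fun k _ => ?_
  rw [← ENNReal.toReal_rpow, ENNReal.toReal_mul, ENNReal.coe_toReal, coe_nnnorm,
    Real.norm_eq_abs]

/-- The forward direction, for a subsequence on which the `u`-norm is identically `1`. -/
lemma fwdAux (p q u r : ℝ) (hu : 1 < u) (hur : u ≤ r)
    (f : ℕ → ℝ → ℝ)
    (hmemu : ∀ n, MemLp (f n) (ENNReal.ofReal u) muHalfLine)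
    (hdisj : ∀ i j, i ≠ j → ∀ᵐ t ∂muHalfLine, f i t * f j t = 0)
    (hle : ∀ g : ℝ → ℝ, (eLpNorm g (ENNReal.ofReal u) muHalfLine).toReal ≤ capNorm p q g)
    (S : ℕ → Prop) (hS : (setOf S).Infinite)
    (hSnorm : ∀ n, S n → (eLpNorm (f n) (ENNReal.ofReal u) muHalfLine).toReal = 1) :
    ∃ φ : ℕ → ℕ, StrictMono φ ∧ ∀ (m : ℕ) (a : ℕ → ℝ),
      (1:ℝ) * (∑ k ∈ range m, |a k| ^ r) ^ (1/r)
        ≤ capNorm p q (fun t => ∑ k ∈ range m, a k * f (φ k) t) := by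
  refine ⟨Nat.nth S, Nat.nth_strictMono hS, fun m a => ?_⟩
  have hinj : Function.Injective (Nat.nth S) := (Nat.nth_strictMono hS).injective
  have hdisj' : ∀ i j, i ≠ j → ∀ᵐ t ∂muHalfLine,
      f (Nat.nth S i) t * f (Nat.nth S j) t = 0 :=
    fun i j hij => hdisj _ _ (fun h => hij (hinj h))
  have hnorm1 : ∀ k, (eLpNorm (f (Nat.nth S k)) (ENNReal.ofReal u) muHalfLine).toReal = 1 :=
    fun k => hSnorm _ (Nat.nth_mem_of_infinite hS k)
  have hcalc := normSumR muHalfLine u (lt_trans one_pos hu) (fun k => f (Nat.nth S k))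
    (fun n => hmemu _) hdisj' m a
  rw [one_mul]
  refine le_trans ?_ (hle _)
  rw [hcalc]
  simp only [hnorm1, mul_one]
  exact lpMono (range m) (fun k => |a k|) (fun k => abs_nonneg _)
    (lt_trans one_pos hu) hur

lemma revAux (p q r : ℝ) (hp : 1 < p) (hq : 1 < q) (hr : 1 < r) (hpq : p ≤ q) (hrq : r < q)
    (C : ℝ) (hC : 0 < C)
    (H : ∀ f : ℕ → ℝ → ℝ,
      (∀ n, MemLpCapLq p q (f n)) →
      (∀ n, capNorm p q (f n) = 1) →
      (∀ i j, i ≠ j → ∀ᵐ t ∂muHalfLine, f i t * f j t = 0) →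
      ∃ φ : ℕ → ℕ, StrictMono φ ∧ ∀ (m : ℕ) (a : ℕ → ℝ),
        C * (∑ k ∈ Finset.range m, |a k| ^ r) ^ (1 / r)
          ≤ capNorm p q (fun t => ∑ k ∈ Finset.range m, a k * f (φ k) t)) : False := by
  have hp0 : (0:ℝ) < p := lt_trans one_pos hp
  have hq0 : (0:ℝ) < q := lt_trans one_pos hq
  set β : ℝ := 1/p - 1/q with hβdef
  have hβ : 0 ≤ β := sub_nonneg.2 (one_div_le_one_div_of_le hp0 hpq)
  set δ : ℕ → ℝ := fun k => (2:ℝ) ^ (-(k:ℝ) / β) with hδdef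
  have hδpos : ∀ k, 0 < δ k := fun k => Real.rpow_pos_of_pos two_pos _
  have hexp_nonpos : ∀ k : ℕ, -(k:ℝ) / β ≤ 0 := fun k =>
    div_nonpos_of_nonpos_of_nonneg (neg_nonpos.2 (Nat.cast_nonneg k)) hβ
  have hδle1 : ∀ k, δ k ≤ 1 := fun k =>
    Real.rpow_le_one_of_one_le_of_nonpos one_le_two (hexp_nonpos k)
  set c : ℕ → ℝ := fun k => δ k ^ (-(1/q)) with hcdef
  set f : ℕ → ℝ → ℝ := fun k => (Set.Ico (k:ℝ) ((k:ℝ) + δ k)).indicator (fun _ => c k)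
    with hfdef
  have hμIco : ∀ k : ℕ, muHalfLine (Set.Ico (k:ℝ) ((k:ℝ) + δ k)) = ENNReal.ofReal (δ k) := by
    intro k
    have hsub : Set.Ico (k:ℝ) ((k:ℝ) + δ k) ∩ Set.Ici 0 = Set.Ico (k:ℝ) ((k:ℝ) + δ k) := by
      apply Set.inter_eq_left.2
      intro x hx
      exact le_trans (Nat.cast_nonneg k) hx.1
    rw [muHalfLine, Measure.restrict_apply measurableSet_Ico, hsub,
      Real.volume_Ico, add_sub_cancel_left]
  have hnorm : ∀ (u : ℝ), 0 < u → ∀ k,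
      (eLpNorm (f k) (ENNReal.ofReal u) muHalfLine).toReal = δ k ^ (1/u - 1/q) := by
    intro u hu k
    rw [hfdef]
    rw [eLpNorm_indicator_const measurableSet_Ico (ENNReal.ofReal_pos.2 hu).ne'
      ENNReal.ofReal_ne_top, hμIco k, ENNReal.toReal_ofReal hu.le]
    rw [ENNReal.toReal_mul, toReal_enorm, Real.norm_eq_abs,
      ← ENNReal.toReal_rpow, ENNReal.toReal_ofReal (hδpos k).le]
    rw [abs_of_pos (Real.rpow_pos_of_pos (hδpos k) _)]
    rw [← Real.rpow_add (hδpos k)]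
    ring_nf
  have hmemf : ∀ n, MemLpCapLq p q (f n) := by
    intro n
    constructor <;>
      exact memLp_indicator_const _ measurableSet_Ico _
        (Or.inr (by rw [hμIco n]; exact ENNReal.ofReal_ne_top))
  have hnorm1 : ∀ n, capNorm p q (f n) = 1 := by
    intro n
    rw [capNorm, hnorm p hp0 n, hnorm q hq0 n, sub_self, Real.rpow_zero]
    exact max_eq_right (Real.rpow_le_one (hδpos n).le (hδle1 n) hβ)
  have hdisj : ∀ i j, i ≠ j → ∀ᵐ t ∂muHalfLine, f i t * f j t = 0 := by
    intro i j hij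
    refine Filter.Eventually.of_forall fun t => ?_
    by_cases ht : t ∈ Set.Ico (i:ℝ) ((i:ℝ) + δ i)
    · have hnot : t ∉ Set.Ico (j:ℝ) ((j:ℝ) + δ j) := by
        intro ht2
        rcases lt_or_gt_of_ne hij with h | h
        · have h3 : (i:ℝ) + 1 ≤ (j:ℝ) := by exact_mod_cast Nat.succ_le_of_lt h
          linarith [ht.2, ht2.1, hδle1 i]
        · have h3 : (j:ℝ) + 1 ≤ (i:ℝ) := by exact_mod_cast Nat.succ_le_of_lt h
          linarith [ht2.2, ht.1, hδle1 j]
      rw [hfdef]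
      simp [Set.indicator_of_notMem hnot]
    · rw [hfdef]
      simp [Set.indicator_of_notMem ht]
  obtain ⟨φ, hφ, hest⟩ := H f hmemf hnorm1 hdisj
  have hdisjφ : ∀ i j, i ≠ j → ∀ᵐ t ∂muHalfLine, f (φ i) t * f (φ j) t = 0 :=
    fun i j hij => hdisj _ _ (fun h => hij (hφ.injective h))
  have he : (0:ℝ) < 1/r - 1/q :=
    sub_pos.2 (one_div_lt_one_div_of_lt (lt_trans one_pos hr) hrq)
  obtain ⟨N, hN⟩ := exists_nat_gt (max 1 ((2/C) ^ (1/(1/r - 1/q))))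
  have hm1 : (1:ℝ) ≤ (N:ℝ) := le_trans (le_max_left _ _) hN.le
  have hmpos : (0:ℝ) < (N:ℝ) := lt_of_lt_of_le one_pos hm1
  have hest' := hest N (fun _ => (N:ℝ) ^ (-(1/q)))
  -- compute the left-hand side
  have habs : |(N:ℝ) ^ (-(1/q))| = (N:ℝ) ^ (-(1/q)) :=
    abs_of_pos (Real.rpow_pos_of_pos hmpos _)
  have hLHS : (∑ k ∈ Finset.range N, |(N:ℝ) ^ (-(1/q))| ^ r) ^ (1/r)
      = (N:ℝ) ^ (1/r - 1/q) := by
    rw [habs, Finset.sum_const, Finset.card_range, nsmul_eq_mul]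
    rw [← Real.rpow_mul hmpos.le]
    nth_rewrite 1 [show (N:ℝ) = (N:ℝ) ^ (1:ℝ) from (Real.rpow_one _).symm]
    rw [← Real.rpow_add hmpos, ← Real.rpow_mul hmpos.le]
    congr 1
    field_simp
    ring
  -- the q-norm of each f (φ k) is 1
  have hqone : ∀ j, (eLpNorm (f j) (ENNReal.ofReal q) muHalfLine).toReal = 1 := by
    intro j
    rw [hnorm q hq0 j, sub_self, Real.rpow_zero]
  -- the q-part of the norm of the combination is 1
  have hqpart : (eLpNorm (fun t => ∑ k ∈ Finset.range N, (fun _ => (N:ℝ) ^ (-(1/q))) k * f (φ k) t)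
      (ENNReal.ofReal q) muHalfLine).toReal = 1 := by
    rw [normSumR muHalfLine q hq0 (fun k => f (φ k)) (fun n => (hmemf _).2) hdisjφ N _]
    simp only [hqone, mul_one, habs]
    rw [Finset.sum_const, Finset.card_range, nsmul_eq_mul]
    rw [← Real.rpow_mul hmpos.le]
    nth_rewrite 1 [show (N:ℝ) = (N:ℝ) ^ (1:ℝ) from (Real.rpow_one _).symm]
    rw [← Real.rpow_add hmpos]
    rw [show (1:ℝ) + -(1/q) * q = 0 by field_simp; norm_num]
    rw [Real.rpow_zero, Real.one_rpow]
  -- the p-part of the norm of the combination is at most 2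
  have hppart : (eLpNorm (fun t => ∑ k ∈ Finset.range N, (fun _ => (N:ℝ) ^ (-(1/q))) k * f (φ k) t)
      (ENNReal.ofReal p) muHalfLine).toReal ≤ 2 := by
    rcases eq_or_lt_of_le hpq with heq | hlt
    · rw [heq, hqpart]; norm_num
    · have hβpos : 0 < β := sub_pos.2 (one_div_lt_one_div_of_lt hp0 hlt)
      have hfun : (fun t => ∑ k ∈ Finset.range N, (fun _ => (N:ℝ) ^ (-(1/q))) k * f (φ k) t)
          = ∑ k ∈ Finset.range N, ((N:ℝ) ^ (-(1/q))) • (f (φ k)) := by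
        funext t
        rw [Finset.sum_apply]
        exact Finset.sum_congr rfl fun k _ => by simp [smul_eq_mul]
      have hterm_ne_top : ∀ k ∈ Finset.range N,
          eLpNorm (((N:ℝ) ^ (-(1/q))) • (f (φ k))) (ENNReal.ofReal p) muHalfLine ≠ ⊤ := by
        intro k _
        rw [eLpNorm_const_smul]
        exact ENNReal.mul_ne_top ENNReal.coe_ne_top (hmemf (φ k)).1.eLpNorm_ne_top
      have h2 := eLpNorm_sum_le
        (fun k _ => ((hmemf (φ k)).1.aestronglyMeasurable.const_smul ((N:ℝ) ^ (-(1/q)))))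
        ((ENNReal.one_le_ofReal).2 hp.le)
        (s := Finset.range N)
      have h3 : (eLpNorm (∑ k ∈ Finset.range N, ((N:ℝ) ^ (-(1/q))) • (f (φ k)))
          (ENNReal.ofReal p) muHalfLine).toReal
          ≤ (∑ k ∈ Finset.range N,
              eLpNorm (((N:ℝ) ^ (-(1/q))) • (f (φ k))) (ENNReal.ofReal p) muHalfLine).toReal :=
        ENNReal.toReal_mono (ENNReal.sum_ne_top.2 hterm_ne_top) h2
      rw [hfun]
      refine le_trans h3 ?_
      rw [ENNReal.toReal_sum hterm_ne_top]
      have hbound : ∀ k ∈ Finset.range N,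
          (eLpNorm (((N:ℝ) ^ (-(1/q))) • (f (φ k))) (ENNReal.ofReal p) muHalfLine).toReal
            ≤ (1/2:ℝ) ^ k := by
        intro k _
        rw [eLpNorm_const_smul, ENNReal.toReal_mul, toReal_enorm,
          Real.norm_eq_abs, habs, hnorm p hp0 (φ k)]
        have hδβ : δ (φ k) ^ (1/p - 1/q) = (2:ℝ) ^ (-(φ k:ℝ)) := by
          show ((2:ℝ) ^ (-(φ k:ℝ) / β)) ^ (1/p - 1/q) = _
          rw [← Real.rpow_mul (by norm_num : (0:ℝ) ≤ 2)]
          congr 1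
          show -(φ k:ℝ) / β * β = -(φ k:ℝ)
          exact div_mul_cancel₀ _ hβpos.ne'
        rw [hδβ]
        have h4 : (2:ℝ) ^ (-(φ k:ℝ)) ≤ (2:ℝ) ^ (-(k:ℝ)) :=
          Real.rpow_le_rpow_of_exponent_le one_le_two
            (neg_le_neg (Nat.cast_le.2 hφ.le_apply))
        have h5 : (2:ℝ) ^ (-(k:ℝ)) = (1/2:ℝ) ^ k := by
          rw [Real.rpow_neg (by norm_num : (0:ℝ) ≤ 2), Real.rpow_natCast, one_div, inv_pow]
        have h6 : (N:ℝ) ^ (-(1/q)) ≤ 1 :=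
          Real.rpow_le_one_of_one_le_of_nonpos hm1
            (neg_nonpos.2 (le_of_lt (by positivity)))
        calc (N:ℝ) ^ (-(1/q)) * (2:ℝ) ^ (-(φ k:ℝ))
            ≤ 1 * (2:ℝ) ^ (-(k:ℝ)) := by
              apply mul_le_mul h6 h4 (Real.rpow_nonneg (by norm_num) _) one_pos.le
          _ = (1/2:ℝ) ^ k := by rw [one_mul, h5]
      refine le_trans (Finset.sum_le_sum hbound) ?_
      exact sum_geometric_two_le N
  -- contradiction
  have hcap : capNorm p q (fun t => ∑ k ∈ Finset.range N,
      (fun _ => (N:ℝ) ^ (-(1/q))) k * f (φ k) t) ≤ 2 := by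
    rw [capNorm]
    exact max_le hppart (by rw [hqpart]; norm_num)
  rw [hLHS] at hest'
  have hlt2 : 2 < C * (N:ℝ) ^ (1/r - 1/q) := by
    have h4 : (2/C) ^ ((1:ℝ)/(1/r - 1/q)) < (N:ℝ) := lt_of_le_of_lt (le_max_right _ _) hN
    have h5 : ((2/C) ^ ((1:ℝ)/(1/r - 1/q))) ^ (1/r - 1/q) < (N:ℝ) ^ (1/r - 1/q) :=
      Real.rpow_lt_rpow (Real.rpow_nonneg (div_nonneg two_pos.le hC.le) _) h4 he
    rw [← Real.rpow_mul (div_nonneg two_pos.le hC.le), one_div_mul_cancel he.ne',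
      Real.rpow_one] at h5
    rw [div_lt_iff₀ hC] at h5
    linarith
  linarith [le_trans hest' hcap]

/-- Corollary 2(ii) for `L_p ∩ L_q` on `[0,∞)`: the space has the `UDT_r`-property iff
`r ≥ max {p, q}`. -/
theorem statement9 (p q r : ℝ) (hp : 1 < p) (hq : 1 < q) (hr : 1 < r) :
    max p q ≤ r ↔
    ∃ C : ℝ, 0 < C ∧ ∀ f : ℕ → ℝ → ℝ,
      (∀ n, MemLpCapLq p q (f n)) →
      (∀ n, capNorm p q (f n) = 1) →
      (∀ i j, i ≠ j → ∀ᵐ t ∂muHalfLine, f i t * f j t = 0) →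
      ∃ φ : ℕ → ℕ, StrictMono φ ∧ ∀ (m : ℕ) (a : ℕ → ℝ),
        C * (∑ k ∈ Finset.range m, |a k| ^ r) ^ (1 / r)
          ≤ capNorm p q (fun t => ∑ k ∈ Finset.range m, a k * f (φ k) t) := by
  constructor
  · intro hmax
    refine ⟨1, one_pos, fun f hmem hnorm hdisj => ?_⟩
    by_cases hinf :
      (setOf fun n => (eLpNorm (f n) (ENNReal.ofReal p) muHalfLine).toReal = 1).Infinite
    · exact fwdAux p q p r hp (le_trans (le_max_left p q) hmax) f (fun n => (hmem n).1) hdisj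
        (fun g => le_max_left _ _) _ hinf (fun n hn => hn)
    · have hfin := Set.not_infinite.1 hinf
      have hinf2 :
          (setOf fun n => ¬ ((eLpNorm (f n) (ENNReal.ofReal p) muHalfLine).toReal = 1)).Infinite := by
        have h := hfin.infinite_compl
        exact h
      refine fwdAux p q q r hq (le_trans (le_max_right p q) hmax) f (fun n => (hmem n).2) hdisj
        (fun g => le_max_right _ _) _ hinf2 ?_
      intro n hn
      have h := hnorm n
      rw [capNorm] at h
      rcases max_eq_iff.1 h with ⟨h1, _⟩ | ⟨h1, _⟩
      · exact absurd h1 hn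
      · exact h1
  · rintro ⟨C, hC, H⟩
    by_contra hcon
    push_neg at hcon
    rcases le_total p q with hpq | hqp
    · have hrq : r < q := by rwa [max_eq_right hpq] at hcon
      exact revAux p q r hp hq hr hpq hrq C hC H
    · have hrp : r < p := by rwa [max_eq_left hqp] at hcon
      refine revAux q p r hq hp hr hqp hrp C hC ?_
      intro f h1 h2 h3
      obtain ⟨φ, hφ, hest⟩ := H f (fun n => ⟨(h1 n).2, (h1 n).1⟩)
        (fun n => (max_comm _ _).trans (h2 n)) h3
      refine ⟨φ, hφ, fun m a => ?_⟩
      calc C * (∑ k ∈ Finset.range m, |a k| ^ r) ^ (1 / r)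
          ≤ capNorm p q (fun t => ∑ k ∈ Finset.range m, a k * f (φ k) t) := hest m a
        _ = capNorm q p (fun t => ∑ k ∈ Finset.range m, a k * f (φ k) t) := max_comm _ _
end

section
/- Let X be a linear subspace of the space of (a.e.-equivalence classes of) real-valued measurable functions on [0,∞) with Lebesgue measure λ, equipped with a norm ‖·‖ satisfying: (i) if g ∈ X and f is measurable with |f| ≤ |g| a.e., then f ∈ X and ‖f‖ ≤ ‖g‖; and (ii) if f ∈ X and g is measurable and equimeasurable with f (i.e. λ{t : |f(t)| > s} = λ{t : |g(t)| > s} for all s > 0), then g ∈ X and ‖g‖ = ‖f‖. Let 1 < p < ∞ and C > 0, and suppose that every sequence {f_n} in X with ‖f_n‖ = 1 and f_i · f_j = 0 a.e. for i ≠ j has a subsequence {f_{n_k}} with ‖Σ_{k=1}^m a_k f_{n_k}‖ ≤ C (Σ_{k=1}^m |a_k|^p)^{1/p} for all scalars a_1,…,a_m and all m. Then for every step function f = Σ_{i=1}^m λ_i χ_{[u_{i−1},u_i)} in X with 0 = u_0 < u_1 < ⋯ < u_m < ∞ and every real s ≥ 1, the dilated function D_s f defined by (D_s f)(t) = f(t/s)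 belongs to X and satisfies ‖D_s f‖ ≤ 2^{1/p} C s^{1/p} ‖f‖. -/
open MeasureTheory Finset
noncomputable def stepS {ι : Type*} (J : Finset ι) (v A B : ι → ℝ) : ℝ → ℝ :=
  fun t => ∑ j ∈ J, v j * Set.indicator (Set.Ico (A j) (B j)) 1 t

lemma stepS_measurable {ι : Type*} (J : Finset ι) (v A B : ι → ℝ) :
    Measurable (stepS J v A B) := by
  apply Finset.measurable_sum
  intro j _
  exact measurable_const.mul (Measurable.indicator measurable_const measurableSet_Ico)

lemma stepS_eq_of_mem {ι : Type*} {J : Finset ι} {v A B : ι → ℝ}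
    (hdisj : (J : Set ι).PairwiseDisjoint fun j => Set.Ico (A j) (B j))
    {j : ι} (hj : j ∈ J) {t : ℝ} (ht : t ∈ Set.Ico (A j) (B j)) :
    stepS J v A B t = v j := by
  unfold stepS
  rw [Finset.sum_eq_single_of_mem j hj]
  · rw [Set.indicator_of_mem ht, Pi.one_apply, mul_one]
  · intro b hb hne
    have hd : Disjoint (Set.Ico (A b) (B b)) (Set.Ico (A j) (B j)) :=
      hdisj hb hj hne
    rw [Set.indicator_of_notMem (Set.disjoint_right.mp hd ht), mul_zero]

lemma stepS_eq_zero {ι : Type*} {J : Finset ι} {v A B : ι → ℝ} {t : ℝ}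
    (h : ∀ j ∈ J, t ∉ Set.Ico (A j) (B j)) :
    stepS J v A B t = 0 := by
  unfold stepS
  apply Finset.sum_eq_zero
  intro j hj
  rw [Set.indicator_of_notMem (h j hj), mul_zero]

lemma stepS_exists_of_ne_zero {ι : Type*} {J : Finset ι} {v A B : ι → ℝ} {t : ℝ}
    (h : stepS J v A B t ≠ 0) : ∃ j ∈ J, t ∈ Set.Ico (A j) (B j) := by
  by_contra hc
  push_neg at hc
  exact h (stepS_eq_zero hc)

lemma stepS_dist {ι : Type*} (J : Finset ι) (v A B : ι → ℝ)
    (hdisj : (J : Set ι).PairwiseDisjoint fun j => Set.Ico (A j) (B j))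
    (hA : ∀ j ∈ J, 0 ≤ A j) (r : ℝ) (hr : 0 < r) :
    muHalfLine {t | r < |stepS J v A B t|}
      = ∑ j ∈ J.filter (fun j => r < |v j|), ENNReal.ofReal (B j - A j) := by
  have hSet : {t | r < |stepS J v A B t|}
      = ⋃ j ∈ J.filter (fun j => r < |v j|), Set.Ico (A j) (B j) := by
    ext t
    simp only [Set.mem_setOf_eq, Set.mem_iUnion, Finset.mem_filter]
    constructor
    · intro ht
      have hne : stepS J v A B t ≠ 0 := by
        intro h0; rw [h0] at ht; simp at ht; linarith
      obtain ⟨j, hj, hmem⟩ := stepS_exists_of_ne_zero hne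
      refine ⟨j, ⟨hj, ?_⟩, hmem⟩
      rwa [stepS_eq_of_mem hdisj hj hmem] at ht
    · rintro ⟨j, ⟨hj, hv⟩, hmem⟩
      rw [stepS_eq_of_mem hdisj hj hmem]
      exact hv
  have hdisj' : ((J.filter (fun j => r < |v j|) : Finset ι) : Set ι).PairwiseDisjoint
      fun j => Set.Ico (A j) (B j) :=
    hdisj.subset (by exact_mod_cast Finset.filter_subset _ _)
  have hmeas : MeasurableSet (⋃ j ∈ J.filter (fun j => r < |v j|), Set.Ico (A j) (B j)) :=
    Finset.measurableSet_biUnion _ (fun j _ => measurableSet_Ico)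
  rw [hSet, muHalfLine, Measure.restrict_apply hmeas]
  have hsub : (⋃ j ∈ J.filter (fun j => r < |v j|), Set.Ico (A j) (B j)) ∩ Set.Ici (0:ℝ)
      = ⋃ j ∈ J.filter (fun j => r < |v j|), Set.Ico (A j) (B j) := by
    apply Set.inter_eq_left.mpr
    intro t ht
    simp only [Set.mem_iUnion, Finset.mem_filter] at ht
    obtain ⟨j, ⟨hj, _⟩, hmem⟩ := ht
    exact le_trans (hA j hj) hmem.1
  rw [hsub, measure_biUnion_finset hdisj' (fun j _ => measurableSet_Ico)]
  exact Finset.sum_congr rfl fun j _ => Real.volume_Ico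

lemma stepS_abs_le {ι : Type*} {J : Finset ι} {v A B A' B' : ι → ℝ}
    (hsub : ∀ j ∈ J, Set.Ico (A j) (B j) ⊆ Set.Ico (A' j) (B' j))
    (hdisj' : (J : Set ι).PairwiseDisjoint fun j => Set.Ico (A' j) (B' j)) (t : ℝ) :
    |stepS J v A B t| ≤ |stepS J v A' B' t| := by
  by_cases h : ∃ j ∈ J, t ∈ Set.Ico (A j) (B j)
  · obtain ⟨j, hj, ht⟩ := h
    have hdisj : (J : Set ι).PairwiseDisjoint fun j => Set.Ico (A j) (B j) := by
      intro a ha b hb hab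
      exact (hdisj' ha hb hab).mono (hsub a ha) (hsub b hb)
    rw [stepS_eq_of_mem hdisj hj ht, stepS_eq_of_mem hdisj' hj (hsub j hj ht)]
  · push_neg at h
    rw [stepS_eq_zero h, abs_zero]
    exact abs_nonneg _

lemma pairwiseDisjoint_Ico_of_chain {m : ℕ} {a b : ℕ → ℝ}
    (h : ∀ i j, i < j → j < m → b i ≤ a j) :
    ((Finset.range m : Finset ℕ) : Set ℕ).PairwiseDisjoint (fun i => Set.Ico (a i) (b i)) := by
  intro i hi j hj hij
  simp only [Finset.coe_range, Set.mem_Iio] at hi hj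
  simp only [Function.onFun]
  rw [Set.Ico_disjoint_Ico]
  rcases lt_or_gt_of_ne hij with hlt | hlt
  · exact le_trans (min_le_left _ _) (le_trans (h i j hlt hj) (le_max_right _ _))
  · exact le_trans (min_le_right _ _) (le_trans (h j i hlt hi) (le_max_left _ _))

lemma mem_finsum (Mem : (ℝ → ℝ) → Prop) (hMzero : Mem 0)
    (hMadd : ∀ f g : ℝ → ℝ, Mem f → Mem g → Mem (f + g))
    (ψ : ℕ → ℝ → ℝ) (h : ∀ k, Mem (ψ k)) :
    ∀ n, Mem (fun t => ∑ k ∈ Finset.range n, ψ k t) := by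
  intro n
  induction n with
  | zero => simpa [Pi.zero_def] using hMzero
  | succ n ih =>
    have he : (fun t => ∑ k ∈ Finset.range (n+1), ψ k t)
        = (fun t => ∑ k ∈ Finset.range n, ψ k t) + ψ n := by
      funext t; simp [Finset.sum_range_succ]
    rw [he]; exact hMadd _ _ ih (h n)

lemma nrm_finsum_le (Mem : (ℝ → ℝ) → Prop) (Nrm : (ℝ → ℝ) → ℝ) (hMzero : Mem 0)
    (hMadd : ∀ f g : ℝ → ℝ, Mem f → Mem g → Mem (f + g))
    (hNtri : ∀ f g : ℝ → ℝ, Mem f → Mem g → Nrm (f + g) ≤ Nrm f + Nrm g)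
    (hN0 : Nrm 0 = 0)
    (ψ : ℕ → ℝ → ℝ) (h : ∀ k, Mem (ψ k)) :
    ∀ n, Nrm (fun t => ∑ k ∈ Finset.range n, ψ k t) ≤ ∑ k ∈ Finset.range n, Nrm (ψ k) := by
  intro n
  induction n with
  | zero => simp only [Finset.range_zero, Finset.sum_empty]
            exact le_of_eq (by simpa [Pi.zero_def] using hN0)
  | succ n ih =>
    have he : (fun t => ∑ k ∈ Finset.range (n+1), ψ k t)
        = (fun t => ∑ k ∈ Finset.range n, ψ k t) + ψ n := by
      funext t; simp [Finset.sum_range_succ]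
    rw [he, Finset.sum_range_succ]
    exact le_trans (hNtri _ _ (mem_finsum Mem hMzero hMadd ψ h n) (h n))
      (add_le_add ih le_rfl)

lemma sum_prod_filter_snd {M : Type*} [AddCommMonoid M] (n m : ℕ) (P : ℕ → Prop)
    [DecidablePred P] (g : ℕ → M) :
    ∑ j ∈ (Finset.range n ×ˢ Finset.range m).filter (fun j => P j.2), g j.2
      = n • ∑ i ∈ (Finset.range m).filter P, g i := by
  simp only [Finset.sum_filter, Finset.sum_product]
  rw [Finset.sum_const, Finset.card_range]
/-- Proposition 3(1), intermediate claim: in a rearrangement invariant function space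
`(Mem, Nrm)` on `[0,∞)` (a linear subspace of measurable functions whose norm is an ideal norm
depending only on the distribution) with the `UDS_p`-property with constant `C`, every step
function `f` satisfies `‖D_s f‖ ≤ 2^{1/p} C s^{1/p} ‖f‖` for all `s ≥ 1`, where
`(D_s f)(t) = f(t/s)`. -/
theorem statement16
    (Mem : (ℝ → ℝ) → Prop) (Nrm : (ℝ → ℝ) → ℝ)
    -- `X` is a linear subspace:
    (hMzero : Mem 0)
    (hMadd : ∀ f g : ℝ → ℝ, Mem f → Mem g → Mem (f + g))
    (hMsmul : ∀ (c : ℝ) (f : ℝ → ℝ), Mem f → Mem (c • f))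
    -- `Nrm` is a norm on it:
    (hNnonneg : ∀ f : ℝ → ℝ, 0 ≤ Nrm f)
    (hNtri : ∀ f g : ℝ → ℝ, Mem f → Mem g → Nrm (f + g) ≤ Nrm f + Nrm g)
    (hNhom : ∀ (c : ℝ) (f : ℝ → ℝ), Mem f → Nrm (c • f) = |c| * Nrm f)
    -- (i) the norm is an ideal (lattice) norm:
    (hideal : ∀ f g : ℝ → ℝ, Measurable f → Mem g → (∀ᵐ t ∂muHalfLine, |f t| ≤ |g t|) →
      Mem f ∧ Nrm f ≤ Nrm g)
    -- (ii) the norm is rearrangement invariant: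
    (hri : ∀ f g : ℝ → ℝ, Mem f → Measurable g →
      (∀ s : ℝ, 0 < s →
        muHalfLine {t | s < |f t|} = muHalfLine {t | s < |g t|}) →
      Mem g ∧ Nrm g = Nrm f)
    (p C : ℝ) (hp : 1 < p) (hC : 0 < C)
    -- the `UDS_p`-property with constant `C`:
    (hUDS : ∀ f : ℕ → ℝ → ℝ, (∀ n, Mem (f n)) → (∀ n, Nrm (f n) = 1) →
      (∀ i j, i ≠ j → ∀ᵐ t ∂muHalfLine, f i t * f j t = 0) →
      ∃ φ : ℕ → ℕ, StrictMono φ ∧ ∀ (m : ℕ) (a : ℕ → ℝ),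
        Nrm (fun t => ∑ k ∈ Finset.range m, a k * f (φ k) t)
          ≤ C * (∑ k ∈ Finset.range m, |a k| ^ p) ^ (1 / p))
    -- `f` is a step function in `X`:
    (m : ℕ) (u : ℕ → ℝ) (lam : ℕ → ℝ) (hu0 : u 0 = 0)
    (humono : ∀ i < m, u i < u (i + 1))
    (f : ℝ → ℝ)
    (hf : f = fun t => ∑ i ∈ Finset.range m,
      lam i * Set.indicator (Set.Ico (u i) (u (i + 1))) 1 t)
    (hMemf : Mem f)
    (s : ℝ) (hs : 1 ≤ s) :
    Mem (fun t => f (t / s)) ∧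
      Nrm (fun t => f (t / s)) ≤ 2 ^ (1 / p) * C * s ^ (1 / p) * Nrm f := by
  have hN0 : Nrm 0 = 0 := by
    have := hNhom 0 0 hMzero
    simpa using this
  have hp0 : (0:ℝ) < p := lt_trans one_pos hp
  have hpne : p ≠ 0 := ne_of_gt hp0
  have hs0 : (0:ℝ) < s := lt_of_lt_of_le one_pos hs
  -- trivial case m = 0
  rcases Nat.eq_zero_or_pos m with hm0 | hm
  · subst hm0
    have hfz : f = 0 := by rw [hf]; funext t; simp
    have h1 : (fun t => f (t / s)) = f := by funext t; rw [hfz]; rfl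
    rw [h1]
    refine ⟨hMemf, ?_⟩
    rw [hfz, hN0]
    simp
  -- main case
  set n := ⌈s⌉₊ with hn
  have hn1 : 1 ≤ n := Nat.one_le_ceil_iff.mpr hs0
  have hnR : (0:ℝ) < n := by exact_mod_cast hn1
  have hsn : s ≤ (n:ℝ) := Nat.le_ceil s
  have hn2s : (n:ℝ) ≤ 2*s := by
    have h2 : (n:ℝ) < s + 1 := Nat.ceil_lt_add_one (le_of_lt hs0)
    linarith
  -- monotonicity of u
  have key : ∀ j, j ≤ m → ∀ i, i ≤ j → u i ≤ u j := by
    intro j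
    induction j with
    | zero =>
      intro _ i hi
      rw [Nat.le_zero.mp hi]
    | succ j ih =>
      intro hj i hi
      rcases Nat.eq_or_lt_of_le hi with h | h
      · rw [h]
      · have h' : i ≤ j := Nat.lt_succ_iff.mp h
        exact le_trans (ih (by omega) i h') (le_of_lt (humono j (by omega)))
  have hum0 : 0 < u m := by
    have h1 := humono 0 hm
    have h2 := key m le_rfl 1 hm
    rw [hu0] at h1
    linarith
  have hu_nonneg : ∀ i, i ≤ m → 0 ≤ u i := by
    intro i hi
    rw [← hu0]
    exact key i hi 0 (Nat.zero_le _)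
  -- step function forms
  have hfS : f = stepS (range m) lam u (fun i => u (i+1)) := by rw [hf]; rfl
  set Dsf : ℝ → ℝ := fun t => f (t / s) with hDsf
  have hDsfS : Dsf = stepS (range m) lam (fun i => s * u i) (fun i => s * u (i+1)) := by
    funext t
    show f (t / s) = _
    rw [hf]
    apply Finset.sum_congr rfl
    intro i _
    congr 1
    have hiff : (t/s ∈ Set.Ico (u i) (u (i+1))) ↔ (t ∈ Set.Ico (s*u i) (s*u (i+1))) := by
      simp only [Set.mem_Ico]
      rw [le_div_iff₀ hs0, div_lt_iff₀ hs0]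
      constructor <;> rintro ⟨h1, h2⟩ <;> exact ⟨by linarith, by linarith⟩
    simp only [Set.indicator_apply, Pi.one_apply, hiff]
  set gk : ℕ → ℝ → ℝ := fun k => stepS (range m) lam
    (fun i => (k:ℝ)*u m + u i) (fun i => (k:ℝ)*u m + u (i+1)) with hgk
  -- disjointness of interval families
  have hDf : ((range m : Finset ℕ) : Set ℕ).PairwiseDisjoint
      (fun i => Set.Ico (u i) (u (i+1))) :=
    pairwiseDisjoint_Ico_of_chain (fun i j hij hj => key j (le_of_lt hj) (i+1) hij)
  have hDgk : ∀ k : ℕ, ((range m : Finset ℕ) : Set ℕ).PairwiseDisjoint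
      (fun i => Set.Ico ((k:ℝ)*u m + u i) ((k:ℝ)*u m + u (i+1))) := by
    intro k
    apply pairwiseDisjoint_Ico_of_chain
    intro i j hij hj
    have := key j (le_of_lt hj) (i+1) hij
    linarith
  have hDscaled : ((range m : Finset ℕ) : Set ℕ).PairwiseDisjoint
      (fun i => Set.Ico (s * u i) (s * u (i+1))) := by
    apply pairwiseDisjoint_Ico_of_chain
    intro i j hij hj
    exact mul_le_mul_of_nonneg_left (key j (le_of_lt hj) (i+1) hij) (le_of_lt hs0)
  -- each translate gk k is in X with the same norm
  have hgkMem : ∀ k : ℕ, Mem (gk k) ∧ Nrm (gk k) = Nrm f := by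
    intro k
    have hc0 : (0:ℝ) ≤ (k:ℝ) * u m := mul_nonneg (Nat.cast_nonneg k) (le_of_lt hum0)
    simp only [hgk]
    apply hri f _ hMemf (stepS_measurable _ _ _ _)
    intro r hr
    rw [hfS,
      stepS_dist (range m) lam u (fun i => u (i+1)) hDf
        (fun i hi => hu_nonneg i (le_of_lt (mem_range.mp hi))) r hr,
      stepS_dist (range m) lam (fun i => (k:ℝ)*u m + u i) (fun i => (k:ℝ)*u m + u (i+1))
        (hDgk k) (fun i hi => add_nonneg hc0 (hu_nonneg i (le_of_lt (mem_range.mp hi)))) r hr]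
    apply Finset.sum_congr rfl
    intro i _
    congr 1
    ring
  -- support of gk k
  have hsupp : ∀ k : ℕ, ∀ t : ℝ, gk k t ≠ 0 → (k:ℝ)*u m ≤ t ∧ t < (k:ℝ)*u m + u m := by
    intro k t hne
    obtain ⟨a, ha, hta⟩ := stepS_exists_of_ne_zero hne
    have ham : a < m := mem_range.mp ha
    constructor
    · exact le_trans (le_add_of_nonneg_right (hu_nonneg a (le_of_lt ham))) hta.1
    · have := key m le_rfl (a+1) ham
      have := hta.2
      linarith
  -- obtain the subsequence and the norm bound on the sum of n copies
  obtain ⟨φ, hφ, hFbound⟩ : ∃ φ : ℕ → ℕ, StrictMono φ ∧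
      Nrm (fun t => ∑ k ∈ range n, gk (φ k) t) ≤ C * ((n:ℝ) ^ (1/p) * Nrm f) := by
    rcases eq_or_ne (Nrm f) 0 with hNf | hNf
    · refine ⟨id, strictMono_id, ?_⟩
      have hb := nrm_finsum_le Mem Nrm hMzero hMadd hNtri hN0 gk (fun k => (hgkMem k).1) n
      have hz : ∑ k ∈ range n, Nrm (gk k) = 0 := by
        apply Finset.sum_eq_zero
        intro k _
        rw [(hgkMem k).2, hNf]
      rw [hNf, mul_zero, mul_zero]
      exact le_trans hb (le_of_eq hz)
    · have hNfpos : 0 < Nrm f := lt_of_le_of_ne (hNnonneg f) (Ne.symm hNf)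
      set hseq : ℕ → ℝ → ℝ := fun k => (Nrm f)⁻¹ • gk k with hh
      have hMemh : ∀ k, Mem (hseq k) := fun k => hMsmul _ _ (hgkMem k).1
      have hNh : ∀ k, Nrm (hseq k) = 1 := by
        intro k
        simp only [hh]
        rw [hNhom _ _ (hgkMem k).1, (hgkMem k).2, abs_of_pos (inv_pos.mpr hNfpos),
          inv_mul_cancel₀ hNf]
      have hdisj : ∀ i j : ℕ, i ≠ j → ∀ᵐ t ∂muHalfLine, hseq i t * hseq j t = 0 := by
        intro i j hij
        apply Filter.Eventually.of_forall
        intro t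
        have hzero : gk i t * gk j t = 0 := by
          by_cases h1 : gk i t = 0
          · rw [h1, zero_mul]
          by_cases h2 : gk j t = 0
          · rw [h2, mul_zero]
          exfalso
          obtain ⟨hi1, hi2⟩ := hsupp i t h1
          obtain ⟨hj1, hj2⟩ := hsupp j t h2
          rcases lt_or_gt_of_ne hij with hlt | hlt
          · have hcast : (i:ℝ) + 1 ≤ (j:ℝ) := by exact_mod_cast Nat.succ_le_of_lt hlt
            nlinarith [mul_le_mul_of_nonneg_right hcast (le_of_lt hum0)]
          · have hcast : (j:ℝ) + 1 ≤ (i:ℝ) := by exact_mod_cast Nat.succ_le_of_lt hlt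
            nlinarith [mul_le_mul_of_nonneg_right hcast (le_of_lt hum0)]
        simp only [hh, Pi.smul_apply, smul_eq_mul]
        rw [mul_mul_mul_comm, hzero, mul_zero]
      obtain ⟨φ, hφ, hb⟩ := hUDS hseq hMemh hNh hdisj
      refine ⟨φ, hφ, ?_⟩
      have hb' := hb n (fun _ => Nrm f)
      have hfe : (fun t => ∑ k ∈ range n, (fun _ : ℕ => Nrm f) k * hseq (φ k) t)
          = (fun t => ∑ k ∈ range n, gk (φ k) t) := by
        funext t
        apply Finset.sum_congr rfl
        intro k _
        simp only [hh, Pi.smul_apply, smul_eq_mul]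
        rw [mul_inv_cancel_left₀ hNf]
      rw [hfe] at hb'
      have hre : (∑ k ∈ range n, |(fun _ : ℕ => Nrm f) k| ^ p) = (n:ℝ) * Nrm f ^ p := by
        simp [Finset.sum_const, Finset.card_range, abs_of_pos hNfpos, nsmul_eq_mul]
      rw [hre] at hb'
      have hrp : ((n:ℝ) * Nrm f ^ p) ^ (1/p) = (n:ℝ)^(1/p) * Nrm f := by
        rw [Real.mul_rpow (le_of_lt hnR) (Real.rpow_nonneg (hNnonneg f) p),
          ← Real.rpow_mul (hNnonneg f), mul_one_div_cancel hpne, Real.rpow_one]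
      rw [hrp] at hb'
      exact hb'
  -- the big function F and the shrunken rearrangement G
  set Fb : ℝ → ℝ := stepS (range n ×ˢ range m) (fun j => lam j.2)
    (fun j => ((φ j.1 : ℕ):ℝ)*u m + u j.2) (fun j => ((φ j.1 : ℕ):ℝ)*u m + u (j.2+1)) with hFb2
  set G : ℝ → ℝ := stepS (range n ×ˢ range m) (fun j => lam j.2)
    (fun j => ((φ j.1 : ℕ):ℝ)*u m + u j.2)
    (fun j => ((φ j.1 : ℕ):ℝ)*u m + u j.2 + (s/(n:ℝ))*(u (j.2+1) - u j.2)) with hG2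
  have hDbig : ((range n ×ˢ range m : Finset (ℕ×ℕ)) : Set (ℕ×ℕ)).PairwiseDisjoint
      (fun j => Set.Ico (((φ j.1 : ℕ):ℝ) * u m + u j.2) (((φ j.1 : ℕ):ℝ) * u m + u (j.2+1))) := by
    rintro ⟨k,i⟩ hk ⟨l,j⟩ hl hne
    simp only [Finset.coe_product, Set.mem_prod, Finset.mem_coe, Finset.mem_range] at hk hl
    obtain ⟨hk1, hk2⟩ := hk
    obtain ⟨hl1, hl2⟩ := hl
    simp only [Function.onFun]
    rcases eq_or_ne k l with rfl | hkl
    · have hij : i ≠ j := fun hc => hne (by rw [hc])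
      rw [Set.Ico_disjoint_Ico]
      rcases lt_or_gt_of_ne hij with hlt | hlt
      · have := key j (le_of_lt hl2) (i+1) hlt
        exact le_trans (min_le_left _ _) (le_trans (by linarith) (le_max_right _ _))
      · have := key i (le_of_lt hk2) (j+1) hlt
        exact le_trans (min_le_right _ _) (le_trans (by linarith) (le_max_left _ _))
    · have hblocks : Disjoint (Set.Ico (((φ k : ℕ):ℝ)*u m) (((φ k : ℕ):ℝ)*u m + u m))
          (Set.Ico (((φ l : ℕ):ℝ)*u m) (((φ l : ℕ):ℝ)*u m + u m)) := by
        rw [Set.Ico_disjoint_Ico]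
        rcases lt_or_gt_of_ne hkl with hlt | hlt
        · have hcast : ((φ k : ℕ):ℝ) + 1 ≤ ((φ l : ℕ):ℝ) := by
            exact_mod_cast Nat.succ_le_of_lt (hφ hlt)
          have hmul := mul_le_mul_of_nonneg_right hcast (le_of_lt hum0)
          exact le_trans (min_le_left _ _) (le_trans (by nlinarith) (le_max_right _ _))
        · have hcast : ((φ l : ℕ):ℝ) + 1 ≤ ((φ k : ℕ):ℝ) := by
            exact_mod_cast Nat.succ_le_of_lt (hφ hlt)
          have hmul := mul_le_mul_of_nonneg_right hcast (le_of_lt hum0)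
          exact le_trans (min_le_right _ _) (le_trans (by nlinarith) (le_max_left _ _))
      apply hblocks.mono
      · apply Set.Ico_subset_Ico
        · exact le_add_of_nonneg_right (hu_nonneg i (le_of_lt hk2))
        · have := key m le_rfl (i+1) hk2
          linarith
      · apply Set.Ico_subset_Ico
        · exact le_add_of_nonneg_right (hu_nonneg j (le_of_lt hl2))
        · have := key m le_rfl (j+1) hl2
          linarith
  have hsub : ∀ j : ℕ×ℕ, j ∈ range n ×ˢ range m →
      Set.Ico (((φ j.1 : ℕ):ℝ)*u m + u j.2)
        (((φ j.1 : ℕ):ℝ)*u m + u j.2 + (s/(n:ℝ))*(u (j.2+1) - u j.2))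
      ⊆ Set.Ico (((φ j.1 : ℕ):ℝ)*u m + u j.2) (((φ j.1 : ℕ):ℝ)*u m + u (j.2+1)) := by
    rintro ⟨k,i⟩ hj
    have him : i < m := mem_range.mp (Finset.mem_product.mp hj).2
    apply Set.Ico_subset_Ico le_rfl
    have hl0 : 0 ≤ u (i+1) - u i := by
      have := humono i him
      linarith
    have hsn1 : s/(n:ℝ) ≤ 1 := (div_le_one hnR).mpr hsn
    have := mul_le_mul_of_nonneg_right hsn1 hl0
    simp only
    linarith
  have hDsmall : ((range n ×ˢ range m : Finset (ℕ×ℕ)) : Set (ℕ×ℕ)).PairwiseDisjoint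
      (fun j => Set.Ico (((φ j.1 : ℕ):ℝ) * u m + u j.2)
        (((φ j.1 : ℕ):ℝ) * u m + u j.2 + (s/(n:ℝ))*(u (j.2+1) - u j.2))) := by
    intro a ha b hb hab
    exact (hDbig ha hb hab).mono (hsub a (Finset.mem_coe.mp ha)) (hsub b (Finset.mem_coe.mp hb))
  have hFeq : Fb = (fun t => ∑ k ∈ range n, gk (φ k) t) := by
    funext t
    show ∑ j ∈ range n ×ˢ range m, _ = _
    rw [Finset.sum_product]
    rfl
  have hMemFb : Mem Fb := by
    rw [hFeq]
    exact mem_finsum Mem hMzero hMadd _ (fun k => (hgkMem (φ k)).1) n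
  have hGF : Mem G ∧ Nrm G ≤ Nrm Fb := by
    apply hideal G Fb (stepS_measurable _ _ _ _) hMemFb
    apply Filter.Eventually.of_forall
    intro t
    exact stepS_abs_le hsub hDbig t
  have hA0big : ∀ j : ℕ×ℕ, j ∈ range n ×ˢ range m → 0 ≤ ((φ j.1 : ℕ):ℝ)*u m + u j.2 := by
    rintro ⟨k,i⟩ hj
    have him : i < m := mem_range.mp (Finset.mem_product.mp hj).2
    exact add_nonneg (mul_nonneg (Nat.cast_nonneg _) (le_of_lt hum0))
      (hu_nonneg i (le_of_lt him))
  have hGD : ∀ r : ℝ, 0 < r → muHalfLine {t | r < |G t|} = muHalfLine {t | r < |Dsf t|} := by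
    intro r hr
    rw [hG2, hDsfS,
      stepS_dist _ _ _ _ hDsmall hA0big r hr,
      stepS_dist _ _ _ _ hDscaled
        (fun i hi => mul_nonneg (le_of_lt hs0) (hu_nonneg i (le_of_lt (mem_range.mp hi)))) r hr]
    trans (∑ j ∈ (range n ×ˢ range m).filter (fun j => r < |lam j.2|),
        ENNReal.ofReal ((s/(n:ℝ))*(u (j.2+1) - u j.2)))
    · apply Finset.sum_congr rfl
      intro j _
      congr 1
      ring
    rw [sum_prod_filter_snd n m (fun i => r < |lam i|)
        (fun i => ENNReal.ofReal ((s/(n:ℝ))*(u (i+1) - u i))), Finset.smul_sum]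
    apply Finset.sum_congr rfl
    intro i _
    rw [nsmul_eq_mul, ← ENNReal.ofReal_natCast n, ← ENNReal.ofReal_mul (Nat.cast_nonneg n)]
    congr 1
    field_simp
  have hfinal : Mem Dsf ∧ Nrm Dsf = Nrm G := by
    apply hri G Dsf hGF.1 _ hGD
    rw [hDsfS]
    exact stepS_measurable _ _ _ _
  refine ⟨hfinal.1, ?_⟩
  rw [hfinal.2]
  have hFbb : Nrm Fb ≤ C * ((n:ℝ)^(1/p) * Nrm f) := by
    rw [hFeq]
    exact hFbound
  have hnp : (n:ℝ)^(1/p) ≤ 2^(1/p) * s^(1/p) := by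
    rw [← Real.mul_rpow (by norm_num) (le_of_lt hs0)]
    exact Real.rpow_le_rpow (le_of_lt hnR) hn2s (by positivity)
  calc Nrm G ≤ Nrm Fb := hGF.2
    _ ≤ C * ((n:ℝ)^(1/p) * Nrm f) := hFbb
    _ ≤ C * ((2^(1/p)*s^(1/p)) * Nrm f) := by
        apply mul_le_mul_of_nonneg_left _ (le_of_lt hC)
        exact mul_le_mul_of_nonneg_right hnp (hNnonneg f)
    _ = 2^(1/p) * C * s^(1/p) * Nrm f := by ring
end

section
/- Let X be a linear subspace of the space of (a.e.-equivalence classes of) real-valued measurable functions on [0,∞) with Lebesgue measure λ, equipped with a norm ‖·‖ satisfying: (i) if g ∈ X and f is measurable with |f| ≤ |g| a.e., then f ∈ X and ‖f‖ ≤ ‖g‖; and (ii) if f ∈ X and g is measurable and equimeasurable with f (i.e. λ{t : |f(t)| > s} = λ{t : |g(t)| > s} for all s > 0), then g ∈ X and ‖g‖ = ‖f‖. Let 1 < q < ∞ and C > 0, and suppose that every sequence {f_n} in X with ‖f_n‖ = 1 and f_i · f_j = 0 a.e. for i ≠ j has a subsequence {f_{n_k}} with C (Σ_{k=1}^m |a_k|^q)^{1/q}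 ≤ ‖Σ_{k=1}^m a_k f_{n_k}‖ for all scalars a_1,…,a_m and all m. Then for every step function f = Σ_{i=1}^m λ_i χ_{[u_{i−1},u_i)} in X with 0 = u_0 < u_1 < ⋯ < u_m < ∞ and every real s ≥ 1, the dilated function D_s f defined by (D_s f)(t) = f(t/s) belongs to X and satisfies ‖D_s f‖ ≥ 2^{−1/q} C s^{1/q} ‖f‖. -/
open MeasureTheory Finset

/-- A generalized step function: `∑ i in A, lam i * χ_{[a i, b i)}`. -/
noncomputable def stepF {ι : Type*} (A : Finset ι) (a b lam : ι → ℝ) : ℝ → ℝ :=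
  fun t => ∑ i ∈ A, lam i * Set.indicator (Set.Ico (a i) (b i)) 1 t

lemma measurable_stepF {ι : Type*} (A : Finset ι) (a b lam : ι → ℝ) :
    Measurable (stepF A a b lam) := by
  apply Finset.measurable_sum
  intro i _
  exact (measurable_const.indicator measurableSet_Ico).const_mul _

lemma stepF_eval_mem {ι : Type*} {A : Finset ι} {a b lam : ι → ℝ}
    (hdisj : ∀ i ∈ A, ∀ j ∈ A, i ≠ j →
      Disjoint (Set.Ico (a i) (b i)) (Set.Ico (a j) (b j)))
    {i : ι} (hiA : i ∈ A) {t : ℝ} (ht : t ∈ Set.Ico (a i) (b i)) :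
    stepF A a b lam t = lam i := by
  rw [stepF]
  rw [Finset.sum_eq_single i]
  · rw [Set.indicator_of_mem ht, Pi.one_apply, mul_one]
  · intro j hjA hji
    rw [Set.indicator_of_notMem, mul_zero]
    intro htj
    exact Set.disjoint_left.mp (hdisj j hjA i hiA hji) htj ht
  · intro h; exact absurd hiA h

lemma stepF_eval_not_mem {ι : Type*} {A : Finset ι} {a b lam : ι → ℝ}
    {t : ℝ} (ht : ∀ i ∈ A, t ∉ Set.Ico (a i) (b i)) :
    stepF A a b lam t = 0 := by
  rw [stepF]
  apply Finset.sum_eq_zero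
  intro i hi
  rw [Set.indicator_of_notMem (ht i hi), mul_zero]

lemma dist_stepF {ι : Type*} (A : Finset ι) (a b lam : ι → ℝ)
    (ha : ∀ i ∈ A, 0 ≤ a i)
    (hdisj : ∀ i ∈ A, ∀ j ∈ A, i ≠ j →
      Disjoint (Set.Ico (a i) (b i)) (Set.Ico (a j) (b j)))
    (r : ℝ) (hr : 0 < r) :
    muHalfLine {t | r < |stepF A a b lam t|}
      = ∑ i ∈ A.filter (fun i => r < |lam i|), ENNReal.ofReal (b i - a i) := by
  classical
  have hset : {t | r < |stepF A a b lam t|}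
      = ⋃ i ∈ A.filter (fun i => r < |lam i|), Set.Ico (a i) (b i) := by
    ext t
    simp only [Set.mem_setOf_eq, Set.mem_iUnion, Finset.mem_filter, exists_prop]
    constructor
    · intro ht
      by_cases hex : ∃ i ∈ A, t ∈ Set.Ico (a i) (b i)
      · obtain ⟨i, hiA, hti⟩ := hex
        rw [stepF_eval_mem hdisj hiA hti] at ht
        exact ⟨i, ⟨hiA, ht⟩, hti⟩
      · push_neg at hex
        rw [stepF_eval_not_mem hex] at ht
        simp only [abs_zero] at ht
        exact absurd ht (not_lt.mpr hr.le)
    · rintro ⟨i, ⟨hiA, hlam⟩, hti⟩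
      rw [stepF_eval_mem hdisj hiA hti]
      exact hlam
  rw [hset, muHalfLine,
    measure_biUnion_finset ?_ (fun i _ => measurableSet_Ico)]
  · refine Finset.sum_congr rfl fun i hi => ?_
    have hsub : Set.Ico (a i) (b i) ⊆ Set.Ici (0 : ℝ) :=
      fun x hx => le_trans (ha i (Finset.mem_filter.mp hi).1) hx.1
    rw [Measure.restrict_apply measurableSet_Ico, Set.inter_eq_left.mpr hsub,
      Real.volume_Ico]
  · intro i hi j hj hij
    simp only [Finset.coe_filter, Set.mem_setOf_eq] at hi hj
    exact hdisj i hi.1 j hj.1 hij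

lemma stepF_abs_le {ι : Type*} {A : Finset ι} {a b a' b' lam : ι → ℝ}
    (hsub : ∀ i ∈ A, Set.Ico (a' i) (b' i) ⊆ Set.Ico (a i) (b i))
    (hdisj : ∀ i ∈ A, ∀ j ∈ A, i ≠ j →
      Disjoint (Set.Ico (a i) (b i)) (Set.Ico (a j) (b j)))
    (t : ℝ) :
    |stepF A a' b' lam t| ≤ |stepF A a b lam t| := by
  have hdisj' : ∀ i ∈ A, ∀ j ∈ A, i ≠ j →
      Disjoint (Set.Ico (a' i) (b' i)) (Set.Ico (a' j) (b' j)) :=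
    fun i hi j hj hij => (hdisj i hi j hj hij).mono (hsub i hi) (hsub j hj)
  by_cases hex : ∃ i ∈ A, t ∈ Set.Ico (a' i) (b' i)
  · obtain ⟨i, hiA, hti⟩ := hex
    rw [stepF_eval_mem hdisj' hiA hti, stepF_eval_mem hdisj hiA (hsub i hiA hti)]
  · push_neg at hex
    rw [stepF_eval_not_mem hex, abs_zero]
    exact abs_nonneg _

lemma ind_shift (a b c t : ℝ) :
    Set.indicator (Set.Ico a b) (1 : ℝ → ℝ) (t - c)
      = Set.indicator (Set.Ico (a + c) (b + c)) 1 t := by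
  have h : t - c ∈ Set.Ico a b ↔ t ∈ Set.Ico (a + c) (b + c) := by
    simp only [Set.mem_Ico]
    constructor <;> rintro ⟨h1, h2⟩ <;> constructor <;> linarith
  by_cases hmem : t ∈ Set.Ico (a + c) (b + c)
  · rw [Set.indicator_of_mem hmem, Set.indicator_of_mem (h.mpr hmem)]
    rfl
  · rw [Set.indicator_of_notMem hmem,
      Set.indicator_of_notMem (fun hh => hmem (h.mp hh))]

lemma ind_scale (a b t : ℝ) {s : ℝ} (hs : 0 < s) :
    Set.indicator (Set.Ico a b) (1 : ℝ → ℝ) (t / s)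
      = Set.indicator (Set.Ico (s * a) (s * b)) 1 t := by
  have h : t / s ∈ Set.Ico a b ↔ t ∈ Set.Ico (s * a) (s * b) := by
    simp only [Set.mem_Ico, le_div_iff₀ hs, div_lt_iff₀ hs]
    constructor <;> rintro ⟨h1, h2⟩ <;> constructor <;> nlinarith
  by_cases hmem : t ∈ Set.Ico (s * a) (s * b)
  · rw [Set.indicator_of_mem hmem, Set.indicator_of_mem (h.mpr hmem)]
    rfl
  · rw [Set.indicator_of_notMem hmem,
      Set.indicator_of_notMem (fun hh => hmem (h.mp hh))]

lemma Ico_disj_of_le {a₁ b₁ a₂ b₂ : ℝ} (h : b₁ ≤ a₂) :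
    Disjoint (Set.Ico a₁ b₁) (Set.Ico a₂ b₂) := by
  rw [Set.disjoint_left]
  rintro x ⟨_, hx2⟩ ⟨hx3, _⟩
  linarith

lemma prod_sum_helper (n m : ℕ) (P : ℕ → Prop) [DecidablePred P] (F : ℕ → ENNReal) :
    ∑ p ∈ ((Finset.range n ×ˢ Finset.range m).filter fun p => P p.2), F p.2
      = (n : ENNReal) * ∑ i ∈ (Finset.range m).filter P, F i := by
  rw [Finset.sum_filter, Finset.sum_product]
  have h1 : ∀ k ∈ Finset.range n,
      (∑ i ∈ Finset.range m, if P (k, i).2 then F (k, i).2 else 0)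
        = ∑ i ∈ (Finset.range m).filter P, F i := by
    intro k _
    simp only [Finset.sum_filter]
  rw [Finset.sum_congr rfl h1, Finset.sum_const, Finset.card_range, nsmul_eq_mul]

set_option maxHeartbeats 1000000

/-- Proposition 3(2), intermediate claim: in a rearrangement invariant function space
`(Mem, Nrm)` on `[0,∞)` (a linear subspace of measurable functions whose norm is an ideal norm
depending only on the distribution) with the `UDT_q`-property with constant `C`, every step
function `f` satisfies `‖D_s f‖ ≥ 2^{-1/q} C s^{1/q} ‖f‖` for all `s ≥ 1`, where
`(D_s f)(t) = f(t/s)`. -/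
theorem statement17
    (Mem : (ℝ → ℝ) → Prop) (Nrm : (ℝ → ℝ) → ℝ)
    -- `X` is a linear subspace:
    (hMzero : Mem 0)
    (hMadd : ∀ f g : ℝ → ℝ, Mem f → Mem g → Mem (f + g))
    (hMsmul : ∀ (c : ℝ) (f : ℝ → ℝ), Mem f → Mem (c • f))
    -- `Nrm` is a norm on it:
    (hNnonneg : ∀ f : ℝ → ℝ, 0 ≤ Nrm f)
    (hNtri : ∀ f g : ℝ → ℝ, Mem f → Mem g → Nrm (f + g) ≤ Nrm f + Nrm g)
    (hNhom : ∀ (c : ℝ) (f : ℝ → ℝ), Mem f → Nrm (c • f) = |c| * Nrm f)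
    -- (i) the norm is an ideal (lattice) norm:
    (hideal : ∀ f g : ℝ → ℝ, Measurable f → Mem g → (∀ᵐ t ∂muHalfLine, |f t| ≤ |g t|) →
      Mem f ∧ Nrm f ≤ Nrm g)
    -- (ii) the norm is rearrangement invariant:
    (hri : ∀ f g : ℝ → ℝ, Mem f → Measurable g →
      (∀ s : ℝ, 0 < s →
        muHalfLine {t | s < |f t|} = muHalfLine {t | s < |g t|}) →
      Mem g ∧ Nrm g = Nrm f)
    (q C : ℝ) (hq : 1 < q) (hC : 0 < C)
    -- the `UDT_q`-property with constant `C`: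
    (hUDT : ∀ f : ℕ → ℝ → ℝ, (∀ n, Mem (f n)) → (∀ n, Nrm (f n) = 1) →
      (∀ i j, i ≠ j → ∀ᵐ t ∂muHalfLine, f i t * f j t = 0) →
      ∃ φ : ℕ → ℕ, StrictMono φ ∧ ∀ (m : ℕ) (a : ℕ → ℝ),
        C * (∑ k ∈ Finset.range m, |a k| ^ q) ^ (1 / q)
          ≤ Nrm (fun t => ∑ k ∈ Finset.range m, a k * f (φ k) t))
    -- `f` is a step function in `X`:
    (m : ℕ) (u : ℕ → ℝ) (lam : ℕ → ℝ) (hu0 : u 0 = 0)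
    (humono : ∀ i < m, u i < u (i + 1))
    (f : ℝ → ℝ)
    (hf : f = fun t => ∑ i ∈ Finset.range m,
      lam i * Set.indicator (Set.Ico (u i) (u (i + 1))) 1 t)
    (hMemf : Mem f)
    (s : ℝ) (hs : 1 ≤ s) :
    Mem (fun t => f (t / s)) ∧
      2 ^ (-(1 / q)) * C * s ^ (1 / q) * Nrm f ≤ Nrm (fun t => f (t / s)) := by
  classical
  have hs0 : (0 : ℝ) < s := lt_of_lt_of_le one_pos hs
  have hq0 : (0 : ℝ) < q := lt_trans one_pos hq
  have hiq : (0 : ℝ) ≤ 1 / q := div_nonneg zero_le_one hq0.le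
  set n : ℕ := ⌊s⌋₊ with hn
  have hn1 : 1 ≤ n := Nat.le_floor (by exact_mod_cast hs)
  have hns : (n : ℝ) ≤ s := Nat.floor_le (le_trans zero_le_one hs)
  have hsn1 : s < (n : ℝ) + 1 := Nat.lt_floor_add_one s
  -- basic monotonicity facts
  have hmono' : ∀ j, j ≤ m → ∀ i, i ≤ j → u i ≤ u j := by
    intro j
    induction j with
    | zero => intro _ i hi; simp [Nat.le_zero.mp hi]
    | succ j ih =>
      intro hj i hi
      rcases Nat.eq_or_lt_of_le hi with h | h
      · rw [h]
      · exact le_trans (ih (le_trans (Nat.le_succ j) hj) i (Nat.lt_succ_iff.mp h))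
          (le_of_lt (humono j (by omega)))
  have hu_nonneg : ∀ i, i ≤ m → 0 ≤ u i := by
    intro i hi; rw [← hu0]; exact hmono' i hi 0 (Nat.zero_le _)
  -- the step function form of `f`
  have hfs : f = stepF (Finset.range m) u (fun i => u (i + 1)) lam := by
    rw [hf]; rfl
  -- disjointness of the scaled families
  have hdisj_scale : ∀ c : ℝ, 0 < c → ∀ i ∈ Finset.range m, ∀ j ∈ Finset.range m, i ≠ j →
      Disjoint (Set.Ico (c * u i) (c * u (i + 1))) (Set.Ico (c * u j) (c * u (j + 1))) := by
    intro c hc i hi j hj hij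
    rw [Finset.mem_range] at hi hj
    rcases Nat.lt_or_ge i j with h | h
    · refine Ico_disj_of_le ?_
      have h1 : u (i + 1) ≤ u j := hmono' j hj.le (i + 1) h
      nlinarith
    · have hji : j < i := lt_of_le_of_ne h (Ne.symm hij)
      refine (Ico_disj_of_le ?_).symm
      have h1 : u (j + 1) ≤ u i := hmono' i hi.le (j + 1) hji
      nlinarith
  have hdisj1 : ∀ i ∈ Finset.range m, ∀ j ∈ Finset.range m, i ≠ j →
      Disjoint (Set.Ico (u i) (u (i + 1))) (Set.Ico (u j) (u (j + 1))) := by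
    have h := hdisj_scale 1 one_pos
    simpa using h
  -- disjointness of the translated (shifted) families
  have hdisj_sh : ∀ c : ℝ, ∀ i ∈ Finset.range m, ∀ j ∈ Finset.range m, i ≠ j →
      Disjoint (Set.Ico (u i + c) (u (i + 1) + c)) (Set.Ico (u j + c) (u (j + 1) + c)) := by
    intro c i hi j hj hij
    rw [Finset.mem_range] at hi hj
    rcases Nat.lt_or_ge i j with h | h
    · refine Ico_disj_of_le ?_
      have h1 : u (i + 1) ≤ u j := hmono' j hj.le (i + 1) h
      linarith
    · have hji : j < i := lt_of_le_of_ne h (Ne.symm hij)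
      refine (Ico_disj_of_le ?_).symm
      have h1 : u (j + 1) ≤ u i := hmono' i hi.le (j + 1) hji
      linarith
  -- disjointness of the translated product families
  have hdisj_trans : ∀ (n' : ℕ) (ψ : ℕ → ℕ), Function.Injective ψ →
      ∀ p ∈ Finset.range n' ×ˢ Finset.range m, ∀ p' ∈ Finset.range n' ×ˢ Finset.range m,
        p ≠ p' →
      Disjoint (Set.Ico (u p.2 + (ψ p.1 : ℝ) * u m) (u (p.2 + 1) + (ψ p.1 : ℝ) * u m))
        (Set.Ico (u p'.2 + (ψ p'.1 : ℝ) * u m) (u (p'.2 + 1) + (ψ p'.1 : ℝ) * u m)) := by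
    intro n' ψ hψ p hp p' hp' hne
    simp only [Finset.mem_product, Finset.mem_range] at hp hp'
    have h4 : 0 ≤ u m := hu_nonneg m le_rfl
    rcases Nat.lt_trichotomy (ψ p.1) (ψ p'.1) with h | h | h
    · refine Ico_disj_of_le ?_
      have h1 : u (p.2 + 1) ≤ u m := hmono' m le_rfl (p.2 + 1) hp.2
      have h2 : 0 ≤ u p'.2 := hu_nonneg _ hp'.2.le
      have h3 : (ψ p.1 : ℝ) + 1 ≤ (ψ p'.1 : ℝ) := by exact_mod_cast Nat.succ_le_of_lt h
      nlinarith
    · have hp1 : p.1 = p'.1 := hψ h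
      have hne2 : p.2 ≠ p'.2 := fun hc => hne (Prod.ext hp1 hc)
      have hcast : (ψ p.1 : ℝ) * u m = (ψ p'.1 : ℝ) * u m := by rw [h]
      rcases Nat.lt_or_ge p.2 p'.2 with h2 | h2
      · refine Ico_disj_of_le ?_
        have := hmono' p'.2 hp'.2.le (p.2 + 1) h2
        linarith
      · have h2' : p'.2 < p.2 := lt_of_le_of_ne h2 (Ne.symm hne2)
        refine (Ico_disj_of_le ?_).symm
        have := hmono' p.2 hp.2.le (p'.2 + 1) h2'
        linarith
    · refine (Ico_disj_of_le ?_).symm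
      have h1 : u (p'.2 + 1) ≤ u m := hmono' m le_rfl (p'.2 + 1) hp'.2
      have h2 : 0 ≤ u p.2 := hu_nonneg _ hp.2.le
      have h3 : (ψ p'.1 : ℝ) + 1 ≤ (ψ p.1 : ℝ) := by exact_mod_cast Nat.succ_le_of_lt h
      nlinarith
  -- nonnegativity of left endpoints
  have ha1 : ∀ i ∈ Finset.range m, 0 ≤ u i :=
    fun i hi => hu_nonneg i (Finset.mem_range.mp hi).le
  have ha_trans : ∀ (n' : ℕ) (ψ : ℕ → ℕ), ∀ p ∈ Finset.range n' ×ˢ Finset.range m,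
      0 ≤ u p.2 + (ψ p.1 : ℝ) * u m := by
    intro n' ψ p hp
    simp only [Finset.mem_product, Finset.mem_range] at hp
    exact add_nonneg (hu_nonneg _ hp.2.le)
      (mul_nonneg (Nat.cast_nonneg _) (hu_nonneg m le_rfl))
  -- pointwise identifications with step functions
  have hDs : ∀ t, f (t / s)
      = stepF (Finset.range m) (fun i => s * u i) (fun i => s * u (i + 1)) lam t := by
    intro t
    rw [hf]
    simp only [stepF]
    exact Finset.sum_congr rfl fun i _ => by rw [ind_scale _ _ _ hs0]
  have hDsF : (fun t => f (t / s))
      = stepF (Finset.range m) (fun i => s * u i) (fun i => s * u (i + 1)) lam :=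
    funext hDs
  have hg : ∀ (j : ℕ) (t : ℝ), f (t - (j : ℝ) * u m)
      = stepF (Finset.range m) (fun i => u i + (j : ℝ) * u m)
          (fun i => u (i + 1) + (j : ℝ) * u m) lam t := by
    intro j t
    rw [hf]
    simp only [stepF]
    exact Finset.sum_congr rfl fun i _ => by rw [ind_shift]
  have hgF : ∀ j : ℕ, (fun t => f (t - (j : ℝ) * u m))
      = stepF (Finset.range m) (fun i => u i + (j : ℝ) * u m)
          (fun i => u (i + 1) + (j : ℝ) * u m) lam :=
    fun j => funext (hg j)
  have hSum : ∀ (n' : ℕ) (ψ : ℕ → ℕ) (t : ℝ),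
      (∑ k ∈ Finset.range n', f (t - (ψ k : ℝ) * u m))
      = stepF (Finset.range n' ×ˢ Finset.range m)
          (fun p => u p.2 + (ψ p.1 : ℝ) * u m)
          (fun p => u (p.2 + 1) + (ψ p.1 : ℝ) * u m) (fun p => lam p.2) t := by
    intro n' ψ t
    simp only [stepF, Finset.sum_product]
    exact Finset.sum_congr rfl fun k _ => by
      rw [hg (ψ k) t]
      rfl
  -- distribution of f
  have hdistf : ∀ r : ℝ, 0 < r → muHalfLine {t | r < |f t|}
      = ∑ i ∈ (Finset.range m).filter (fun i => r < |lam i|),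
          ENNReal.ofReal (u (i + 1) - u i) := by
    intro r hr
    rw [hfs]
    exact dist_stepF _ _ _ _ ha1 hdisj1 r hr
  -- distribution of the translated sums
  have hdistSum : ∀ (n' : ℕ) (ψ : ℕ → ℕ), Function.Injective ψ → ∀ r : ℝ, 0 < r →
      muHalfLine {t | r < |∑ k ∈ Finset.range n', f (t - (ψ k : ℝ) * u m)|}
      = (n' : ENNReal) * ∑ i ∈ (Finset.range m).filter (fun i => r < |lam i|),
          ENNReal.ofReal (u (i + 1) - u i) := by
    intro n' ψ hψ r hr
    have hrw : {t : ℝ | r < |∑ k ∈ Finset.range n', f (t - (ψ k : ℝ) * u m)|}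
        = {t : ℝ | r < |stepF (Finset.range n' ×ˢ Finset.range m)
            (fun p => u p.2 + (ψ p.1 : ℝ) * u m)
            (fun p => u (p.2 + 1) + (ψ p.1 : ℝ) * u m) (fun p => lam p.2) t|} := by
      ext t
      rw [Set.mem_setOf_eq, Set.mem_setOf_eq, hSum n' ψ t]
    rw [hrw]
    have h1 := dist_stepF (Finset.range n' ×ˢ Finset.range m)
      (fun p => u p.2 + (ψ p.1 : ℝ) * u m)
      (fun p => u (p.2 + 1) + (ψ p.1 : ℝ) * u m) (fun p => lam p.2)
      (ha_trans n' ψ) (hdisj_trans n' ψ hψ) r hr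
    refine h1.trans ?_
    refine Eq.trans ?_ (prod_sum_helper n' m (fun i => r < |lam i|)
      (fun i => ENNReal.ofReal (u (i + 1) - u i)))
    refine Finset.sum_congr rfl fun p _ => ?_
    congr 1
    ring
  -- membership of the translated copies and their norms
  have memG : ∀ j : ℕ, Mem (fun t => f (t - (j : ℝ) * u m))
      ∧ Nrm (fun t => f (t - (j : ℝ) * u m)) = Nrm f := by
    intro j
    refine hri f _ hMemf (by rw [hgF j]; exact measurable_stepF _ _ _ _) ?_
    intro r hr
    have hrw : {t : ℝ | r < |f (t - (j : ℝ) * u m)|}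
        = {t : ℝ | r < |stepF (Finset.range m) (fun i => u i + (j : ℝ) * u m)
            (fun i => u (i + 1) + (j : ℝ) * u m) lam t|} := by
      ext t; rw [Set.mem_setOf_eq, Set.mem_setOf_eq, hg j t]
    rw [hrw, hdistf r hr, dist_stepF _ _ _ _
      (fun i hi => add_nonneg (ha1 i hi)
        (mul_nonneg (Nat.cast_nonneg _) (hu_nonneg m le_rfl)))
      (hdisj_sh ((j : ℝ) * u m)) r hr]
    refine Finset.sum_congr rfl fun i _ => ?_
    congr 1
    ring
  -- membership of the sums of translated copies
  have memSum : ∀ (n' : ℕ) (ψ : ℕ → ℕ),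
      Mem (fun t => ∑ k ∈ Finset.range n', f (t - (ψ k : ℝ) * u m)) := by
    intro n' ψ
    induction n' with
    | zero =>
      have h0 : (fun t : ℝ => ∑ k ∈ Finset.range 0, f (t - (ψ k : ℝ) * u m)) = 0 := by
        funext t; simp
      rw [h0]; exact hMzero
    | succ n' ih =>
      have hsucc : (fun t : ℝ => ∑ k ∈ Finset.range (n' + 1), f (t - (ψ k : ℝ) * u m))
          = (fun t => ∑ k ∈ Finset.range n', f (t - (ψ k : ℝ) * u m))
            + (fun t => f (t - (ψ n' : ℝ) * u m)) := by
        funext t; simp [Finset.sum_range_succ]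
      rw [hsucc]
      exact hMadd _ _ ih (memG (ψ n')).1
  -- `D_N f` where `N = n + 1`
  have hNpos : (0 : ℝ) < ((n + 1 : ℕ) : ℝ) := by positivity
  have hsleN : s ≤ ((n + 1 : ℕ) : ℝ) := by push_cast; linarith
  have hdisjDN := hdisj_scale ((n + 1 : ℕ) : ℝ) hNpos
  have hdisjDs := hdisj_scale s hs0
  -- Mem (D_N f)
  have memDN : Mem (stepF (Finset.range m) (fun i => ((n + 1 : ℕ) : ℝ) * u i)
      (fun i => ((n + 1 : ℕ) : ℝ) * u (i + 1)) lam)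
      ∧ Nrm (stepF (Finset.range m) (fun i => ((n + 1 : ℕ) : ℝ) * u i)
        (fun i => ((n + 1 : ℕ) : ℝ) * u (i + 1)) lam)
        = Nrm (fun t => ∑ k ∈ Finset.range (n + 1), f (t - (k : ℝ) * u m)) := by
    refine hri _ _ (memSum (n + 1) id) (measurable_stepF _ _ _ _) ?_
    intro r hr
    refine (hdistSum (n + 1) id Function.injective_id r hr).trans ?_
    rw [dist_stepF _ _ _ _ (fun i hi => mul_nonneg hNpos.le (ha1 i hi)) hdisjDN r hr,
      Finset.mul_sum]
    refine Finset.sum_congr rfl fun i _ => ?_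
    rw [show ((n + 1 : ℕ) : ℝ) * u (i + 1) - ((n + 1 : ℕ) : ℝ) * u i
        = ((n + 1 : ℕ) : ℝ) * (u (i + 1) - u i) by ring,
      ENNReal.ofReal_mul (Nat.cast_nonneg _), ENNReal.ofReal_natCast]
  -- the inner approximation `h'` to `D_s f` inside `D_N f`
  have hsubN : ∀ i ∈ Finset.range m,
      Set.Ico (((n + 1 : ℕ) : ℝ) * u i) (((n + 1 : ℕ) : ℝ) * u i + s * (u (i + 1) - u i))
        ⊆ Set.Ico (((n + 1 : ℕ) : ℝ) * u i) (((n + 1 : ℕ) : ℝ) * u (i + 1)) := by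
    intro i hi
    refine Set.Ico_subset_Ico_right ?_
    have hd : 0 ≤ u (i + 1) - u i := by
      have := humono i (Finset.mem_range.mp hi); linarith
    nlinarith
  have memh' : Mem (stepF (Finset.range m) (fun i => ((n + 1 : ℕ) : ℝ) * u i)
      (fun i => ((n + 1 : ℕ) : ℝ) * u i + s * (u (i + 1) - u i)) lam) := by
    refine (hideal _ _ (measurable_stepF _ _ _ _) memDN.1 ?_).1
    exact Filter.Eventually.of_forall (stepF_abs_le hsubN hdisjDN)
  -- Mem (D_s f) and its norm equals that of h'
  have memDs : Mem (fun t => f (t / s))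
      ∧ Nrm (fun t => f (t / s))
        = Nrm (stepF (Finset.range m) (fun i => ((n + 1 : ℕ) : ℝ) * u i)
            (fun i => ((n + 1 : ℕ) : ℝ) * u i + s * (u (i + 1) - u i)) lam) := by
    refine hri _ _ memh' (by rw [hDsF]; exact measurable_stepF _ _ _ _) ?_
    intro r hr
    have hrw : {t : ℝ | r < |f (t / s)|}
        = {t : ℝ | r < |stepF (Finset.range m) (fun i => s * u i)
            (fun i => s * u (i + 1)) lam t|} := by
      ext t; rw [Set.mem_setOf_eq, Set.mem_setOf_eq, hDs t]
    rw [hrw,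
      dist_stepF _ _ _ _ (fun i hi => mul_nonneg hNpos.le (ha1 i hi))
        (fun i hi j hj hij => (hdisjDN i hi j hj hij).mono (hsubN i hi) (hsubN j hj)) r hr,
      dist_stepF _ _ _ _ (fun i hi => mul_nonneg hs0.le (ha1 i hi)) hdisjDs r hr]
    refine Finset.sum_congr rfl fun i _ => ?_
    congr 1
    ring
  refine ⟨memDs.1, ?_⟩
  -- trivial case: Nrm f = 0
  rcases eq_or_lt_of_le (hNnonneg f) with hNf | hNf
  · rw [← hNf, mul_zero]
    exact hNnonneg _
  -- main case : Nrm f > 0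
  have hm0 : m ≠ 0 := by
    rintro rfl
    have hf0 : f = 0 := by rw [hf]; funext t; simp
    have h00 : Nrm (0 : ℝ → ℝ) = 0 := by
      have := hNhom 0 0 hMzero
      simpa using this
    rw [hf0, h00] at hNf
    exact lt_irrefl 0 hNf
  have hum_pos : 0 < u m := by
    rw [← hu0]
    exact lt_of_lt_of_le (humono 0 (Nat.pos_of_ne_zero hm0))
      (hmono' m le_rfl 1 (Nat.one_le_iff_ne_zero.mpr hm0))
  -- support of f
  have hsupp : ∀ x : ℝ, f x ≠ 0 → 0 ≤ x ∧ x < u m := by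
    intro x hx
    by_cases hex : ∃ i ∈ Finset.range m, x ∈ Set.Ico (u i) (u (i + 1))
    · obtain ⟨i, hi, hxi⟩ := hex
      rw [Finset.mem_range] at hi
      exact ⟨le_trans (hu_nonneg i hi.le) hxi.1,
        lt_of_lt_of_le hxi.2 (hmono' m le_rfl (i + 1) hi)⟩
    · push_neg at hex
      exact absurd (by rw [hfs]; exact stepF_eval_not_mem hex) hx
  -- the UDT sequence
  have hmemseq : ∀ j : ℕ, Mem ((Nrm f)⁻¹ • fun t => f (t - (j : ℝ) * u m)) :=
    fun j => hMsmul _ _ (memG j).1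
  have hnrmseq : ∀ j : ℕ, Nrm ((Nrm f)⁻¹ • fun t => f (t - (j : ℝ) * u m)) = 1 := by
    intro j
    rw [hNhom _ _ (memG j).1, (memG j).2, abs_of_nonneg (inv_nonneg.mpr (hNnonneg f)),
      inv_mul_cancel₀ (ne_of_gt hNf)]
  have hdisjseq : ∀ i j : ℕ, i ≠ j → ∀ᵐ t ∂muHalfLine,
      ((Nrm f)⁻¹ • fun t' => f (t' - (i : ℝ) * u m)) t
        * ((Nrm f)⁻¹ • fun t' => f (t' - (j : ℝ) * u m)) t = 0 := by
    intro i j hij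
    refine Filter.Eventually.of_forall fun t => ?_
    have hkey : f (t - (i : ℝ) * u m) * f (t - (j : ℝ) * u m) = 0 := by
      by_contra hcon
      have h1 : f (t - (i : ℝ) * u m) ≠ 0 := fun h => hcon (by rw [h, zero_mul])
      have h2 : f (t - (j : ℝ) * u m) ≠ 0 := fun h => hcon (by rw [h, mul_zero])
      obtain ⟨hi1, hi2⟩ := hsupp _ h1
      obtain ⟨hj1, hj2⟩ := hsupp _ h2
      rcases Nat.lt_or_ge i j with h | h
      · have hc : (i : ℝ) + 1 ≤ (j : ℝ) := by exact_mod_cast Nat.succ_le_of_lt h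
        nlinarith
      · have hj' : j < i := lt_of_le_of_ne h (Ne.symm hij)
        have hc : (j : ℝ) + 1 ≤ (i : ℝ) := by exact_mod_cast Nat.succ_le_of_lt hj'
        nlinarith
    simp only [Pi.smul_apply, smul_eq_mul]
    rcases mul_eq_zero.mp hkey with h | h <;> rw [h] <;> ring
  obtain ⟨φ, hφ, hin⟩ := hUDT _ hmemseq hnrmseq hdisjseq
  have key := hin n (fun _ => 1)
  have hLHS : (∑ k ∈ Finset.range n, |(1 : ℝ)| ^ q) = (n : ℝ) := by
    simp [Real.one_rpow]
  simp only [one_mul] at key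
  rw [hLHS] at key
  have hrw2 : (fun t => ∑ k ∈ Finset.range n,
      ((Nrm f)⁻¹ • fun t' => f (t' - (φ k : ℝ) * u m)) t)
      = (Nrm f)⁻¹ • fun t => ∑ k ∈ Finset.range n, f (t - (φ k : ℝ) * u m) := by
    funext t
    simp [Finset.mul_sum]
  rw [hrw2, hNhom _ _ (memSum n φ), abs_of_nonneg (inv_nonneg.mpr (hNnonneg f))] at key
  -- so C n^{1/q} ‖f‖ ≤ ‖F_n‖
  have hFnlow : C * (n : ℝ) ^ (1 / q) * Nrm f
      ≤ Nrm (fun t => ∑ k ∈ Finset.range n, f (t - (φ k : ℝ) * u m)) := by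
    have h2 := mul_le_mul_of_nonneg_right key (hNnonneg f)
    have h3 : (Nrm f)⁻¹ * Nrm (fun t => ∑ k ∈ Finset.range n, f (t - (φ k : ℝ) * u m))
        * Nrm f = Nrm (fun t => ∑ k ∈ Finset.range n, f (t - (φ k : ℝ) * u m)) := by
      rw [mul_comm, ← mul_assoc, mul_inv_cancel₀ (ne_of_gt hNf), one_mul]
    linarith
  -- the inner approximation `h` to `D_s f`, equimeasurable with `F_n`
  have hsubs : ∀ i ∈ Finset.range m,
      Set.Ico (s * u i) (s * u i + (n : ℝ) * (u (i + 1) - u i))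
        ⊆ Set.Ico (s * u i) (s * u (i + 1)) := by
    intro i hi
    refine Set.Ico_subset_Ico_right ?_
    have hd : 0 ≤ u (i + 1) - u i := by
      have := humono i (Finset.mem_range.mp hi); linarith
    nlinarith
  have hnn : (0 : ℝ) ≤ (n : ℝ) := Nat.cast_nonneg n
  have hNrmh : Nrm (stepF (Finset.range m) (fun i => s * u i)
      (fun i => s * u i + (n : ℝ) * (u (i + 1) - u i)) lam)
      = Nrm (fun t => ∑ k ∈ Finset.range n, f (t - (φ k : ℝ) * u m)) := by
    refine (hri _ _ (memSum n φ) (measurable_stepF _ _ _ _) ?_).2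
    intro r hr
    refine (hdistSum n φ hφ.injective r hr).trans ?_
    rw [dist_stepF _ _ _ _ (fun i hi => mul_nonneg hs0.le (ha1 i hi))
        (fun i hi j hj hij => (hdisjDs i hi j hj hij).mono (hsubs i hi) (hsubs j hj)) r hr,
      Finset.mul_sum]
    refine Finset.sum_congr rfl fun i _ => ?_
    rw [show s * u i + (n : ℝ) * (u (i + 1) - u i) - s * u i
        = (n : ℝ) * (u (i + 1) - u i) by ring,
      ENNReal.ofReal_mul hnn, ENNReal.ofReal_natCast]
  -- ‖h‖ ≤ ‖D_s f‖
  have hle : Nrm (stepF (Finset.range m) (fun i => s * u i)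
      (fun i => s * u i + (n : ℝ) * (u (i + 1) - u i)) lam)
      ≤ Nrm (fun t => f (t / s)) := by
    refine (hideal _ _ (measurable_stepF _ _ _ _) memDs.1 ?_).2
    refine Filter.Eventually.of_forall fun t => ?_
    rw [hDs t]
    exact stepF_abs_le hsubs hdisjDs t
  -- final arithmetic
  have h2q : (2 : ℝ) ^ (-(1 / q)) * s ^ (1 / q) ≤ (n : ℝ) ^ (1 / q) := by
    have hdiv : (2 : ℝ) ^ (-(1 / q)) * s ^ (1 / q) = (s / 2) ^ (1 / q) := by
      rw [Real.div_rpow (by linarith : (0 : ℝ) ≤ s) (by norm_num : (0 : ℝ) ≤ 2),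
        Real.rpow_neg (by norm_num : (0 : ℝ) ≤ 2)]
      ring
    rw [hdiv]
    refine Real.rpow_le_rpow (by linarith) ?_ hiq
    have hn1' : (1 : ℝ) ≤ (n : ℝ) := by exact_mod_cast hn1
    linarith
  calc 2 ^ (-(1 / q)) * C * s ^ (1 / q) * Nrm f
      = C * (2 ^ (-(1 / q)) * s ^ (1 / q)) * Nrm f := by ring
    _ ≤ C * (n : ℝ) ^ (1 / q) * Nrm f :=
        mul_le_mul_of_nonneg_right (mul_le_mul_of_nonneg_left h2q hC.le) (hNnonneg f)
    _ ≤ Nrm (fun t => ∑ k ∈ Finset.range n, f (t - (φ k : ℝ) * u m)) := hFnlow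
    _ = Nrm (stepF (Finset.range m) (fun i => s * u i)
          (fun i => s * u i + (n : ℝ) * (u (i + 1) - u i)) lam) := hNrmh.symm
    _ ≤ Nrm (fun t => f (t / s)) := hle
end
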